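/- arXiv:1106.4982 — 8 statements merged into one kernel-verified Lean document; each statement's English description precedes it below -/
import Mathlib

section
/- Let n ≥ 3 and let B_n be the Artin braid group on n strands. Then Γ_2(B_n) = Γ_3(B_n). -/
open scoped commutatorElement


/-- Relators of the Artin braid group `B_n` on `n` strands: generators
`σ_1, …, σ_{n-1}` are indexed by `Fin (n-1)` (the generator of index `i`
being `σ_{i+1}`). -/
def braidRels (n : ℕ) : Set (FreeGroup (Fin (n - 1))) :=
  {r | ∃ i j : Fin (n - 1), (i : ℕ) + 2 ≤ (j : ℕ) ∧
      r = .of i * .of j * (.of j * .of i)⁻¹} ∪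
  {r | ∃ i j : Fin (n - 1), (i : ℕ) + 1 = (j : ℕ) ∧
      r = .of i * .of j * .of i * (.of j * .of i * .of j)⁻¹}

/-- The Artin braid group on `n` strands, as a presented group. -/
abbrev BraidGroup (n : ℕ) := PresentedGroup (braidRels n)

/-- In the presented group, each relator becomes trivial. -/
lemma braid_rel_eq_one {n : ℕ} {r : FreeGroup (Fin (n - 1))} (hr : r ∈ braidRels n) :
    PresentedGroup.mk (braidRels n) r = 1 := by
  rw [PresentedGroup.mk_eq_one_iff]
  exact Subgroup.subset_normalClosure hr

/-- In a group where all triple commutators vanish, an element commutes with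
any conjugate of itself. -/
lemma commute_conj_of_class_two {Q : Type*} [Group Q]
    (hcent : ∀ x y z : Q, ⁅⁅x, y⁆, z⁆ = 1) (a c : Q) :
    Commute a (c * a * c⁻¹) := by
  have hk : c * a * c⁻¹ = a * ⁅a⁻¹, c⁆ := by
    simp [commutatorElement_def]; group
  rw [hk]
  exact (Commute.refl a).mul_right
    ((commutatorElement_eq_one_iff_commute.mp (hcent a⁻¹ c a)).symm)

theorem stmt2 (n : ℕ) (hn : 3 ≤ n) :
    Subgroup.lowerCentralSeries (⊤ : Subgroup (BraidGroup n)) 1 =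
      Subgroup.lowerCentralSeries (⊤ : Subgroup (BraidGroup n)) 2 := by
  set G := BraidGroup n
  set N := (⊤ : Subgroup G).lowerCentralSeries 2 with hN
  refine le_antisymm ?_ (Subgroup.lowerCentralSeries_antitone _ (by norm_num))
  -- work in the quotient Q = G ⧸ N
  haveI : N.Normal := inferInstance
  set π : G →* G ⧸ N := QuotientGroup.mk' N with hπ
  -- triple commutators vanish in Q
  have hcent : ∀ x y z : G ⧸ N, ⁅⁅x, y⁆, z⁆ = 1 := by
    intro x y z
    obtain ⟨a, rfl⟩ := QuotientGroup.mk'_surjective N x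
    obtain ⟨b, rfl⟩ := QuotientGroup.mk'_surjective N y
    obtain ⟨c, rfl⟩ := QuotientGroup.mk'_surjective N z
    have h1 : ⁅a, b⁆ ∈ (⊤ : Subgroup G).lowerCentralSeries 1 := by
      show ⁅a, b⁆ ∈ ⁅(⊤ : Subgroup G), ⊤⁆
      exact Subgroup.commutator_mem_commutator (Subgroup.mem_top a) (Subgroup.mem_top b)
    have h2 : ⁅⁅a, b⁆, c⁆ ∈ (⊤ : Subgroup G).lowerCentralSeries 2 := by
      show ⁅⁅a, b⁆, c⁆ ∈ ⁅(⊤ : Subgroup G).lowerCentralSeries 1, ⊤⁆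
      exact Subgroup.commutator_mem_commutator h1 (Subgroup.mem_top c)
    have h3 : π ⁅⁅a, b⁆, c⁆ = 1 := by
      rw [hπ, QuotientGroup.mk'_apply, QuotientGroup.eq_one_iff]
      exact h2
    calc ⁅⁅π a, π b⁆, π c⁆ = π ⁅⁅a, b⁆, c⁆ := by
          rw [map_commutatorElement, map_commutatorElement]
      _ = 1 := h3
  -- images of generators pairwise commute
  have key : ∀ i j : Fin (n - 1), (i : ℕ) ≤ (j : ℕ) →
      Commute (π (PresentedGroup.of i)) (π (PresentedGroup.of j)) := by
    intro i j hij
    rcases eq_or_lt_of_le hij with h | h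
    · have : i = j := Fin.ext h
      subst this; exact Commute.refl _
    rcases eq_or_lt_of_le (Nat.succ_le_of_lt h) with h1 | h2
    · -- adjacent: braid relation
      have hr : PresentedGroup.of (rels := braidRels n) i * .of j * .of i *
          (.of j * .of i * .of j)⁻¹ = 1 := by
        have := braid_rel_eq_one (n := n)
          (r := FreeGroup.of i * FreeGroup.of j * FreeGroup.of i *
            (FreeGroup.of j * FreeGroup.of i * FreeGroup.of j)⁻¹)
          (Or.inr ⟨i, j, h1, rfl⟩)
        simpa [PresentedGroup.of, map_mul, map_inv] using this
      -- derive σ_j = c σ_i c⁻¹ with c = σ_i σ_j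
      set a : G := PresentedGroup.of i
      set b : G := PresentedGroup.of j
      have hb : b = (a * b) * a * (a * b)⁻¹ := by
        have : a * b * a = b * a * b := by
          rw [mul_inv_eq_one] at hr
          simpa [a, b] using hr
        group
        rw [show a * b * a = b * a * b from this]
        group
      have : Commute (π a) (π b) := by
        rw [hb, map_mul, map_mul, map_inv, map_mul]
        exact commute_conj_of_class_two hcent (π a) (π a * π b)
      exact this
    · -- far apart: commutation relation
      have hr : PresentedGroup.of (rels := braidRels n) i * .of j *
          (.of j * .of i)⁻¹ = 1 := by
        have := braid_rel_eq_one (n := n)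
          (r := FreeGroup.of i * FreeGroup.of j * (FreeGroup.of j * FreeGroup.of i)⁻¹)
          (Or.inl ⟨i, j, h2, rfl⟩)
        simpa [PresentedGroup.of, map_mul, map_inv] using this
      rw [mul_inv_eq_one] at hr
      exact Commute.map hr (f := π)
  -- every element of Q is central
  have habel : ∀ x y : G ⧸ N, Commute x y := by
    have hgen : ∀ g : G, π g ∈ Subgroup.center (G ⧸ N) := by
      intro g
      have hmem : g ∈ Subgroup.closure (Set.range (PresentedGroup.of (rels := braidRels n))) := by
        rw [PresentedGroup.closure_range_of]; trivial
      refine Subgroup.closure_induction ?_ ?_ ?_ ?_ hmem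
      · rintro x ⟨i, rfl⟩
        rw [Subgroup.mem_center_iff]
        intro y
        obtain ⟨h, rfl⟩ := QuotientGroup.mk'_surjective N y
        have hmem2 : h ∈ Subgroup.closure
            (Set.range (PresentedGroup.of (rels := braidRels n))) := by
          rw [PresentedGroup.closure_range_of]; trivial
        refine Subgroup.closure_induction ?_ ?_ ?_ ?_ hmem2
        · rintro x ⟨j, rfl⟩
          rcases le_total (i : ℕ) (j : ℕ) with hle | hle
          · exact (key i j hle).symm.eq
          · exact (key j i hle).eq
        · simp
        · intro x y _ _ hx hy
          rw [map_mul, mul_assoc, hy, ← mul_assoc, hx, mul_assoc]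
        · intro x _ hx
          rw [map_inv]
          exact (Commute.inv_left hx : Commute _ _)
      · simpa using Subgroup.one_mem _
      · intro x y _ _ hx hy
        rw [map_mul]; exact Subgroup.mul_mem _ hx hy
      · intro x _ hx
        rw [map_inv]; exact Subgroup.inv_mem _ hx
    intro x y
    obtain ⟨g, rfl⟩ := QuotientGroup.mk'_surjective N x
    exact (Subgroup.mem_center_iff.mp (hgen g) y).symm
  -- conclude
  rw [Subgroup.top_lowerCentralSeries_one, commutator_def, Subgroup.commutator_le]
  intro a _ b _
  have : π ⁅a, b⁆ = 1 := by
    rw [map_commutatorElement]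
    exact commutatorElement_eq_one_iff_commute.mpr (habel _ _)
  rwa [hπ, QuotientGroup.mk'_apply, QuotientGroup.eq_one_iff] at this
end

section
/- Let g ≥ 1 and n ≥ 3. Then the quotient Γ_2(B_n(Σ_g))/Γ_3(B_n(Σ_g)) is isomorphic to ℤ. -/
/-- Generators of the braid group `B_n(Σ_g)` of the compact orientable genus-`g`
surface with one boundary component: `a i`, `b i` for `i : Fin g` (the generators
`a_{i+1}, b_{i+1}`) and `s j` for `j : Fin (n-1)` (the generator `σ_{j+1}`). -/
inductive SurfGen (g n : ℕ) : Type
  | a : Fin g → SurfGen g n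
  | b : Fin g → SurfGen g n
  | s : Fin (n - 1) → SurfGen g n

namespace SurfGen

variable {g n : ℕ}

/-- `c false i = a_i` and `c true i = b_i`. -/
def c (t : Bool) (i : Fin g) : SurfGen g n := if t then .b i else .a i

end SurfGen

/-- Relators of the braid group `B_n(Σ_g)` of the compact orientable genus-`g`
surface with one boundary component (generator `σ_1` is `s ⟨0, h⟩`). -/
def surfBraidRels (g n : ℕ) : Set (FreeGroup (SurfGen g n)) :=
  -- σ_i σ_j = σ_j σ_i for |i-j| ≥ 2
  {r | ∃ i j : Fin (n - 1), (i : ℕ) + 2 ≤ (j : ℕ) ∧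
      r = .of (.s i) * .of (.s j) * (.of (.s j) * .of (.s i))⁻¹} ∪
  -- σ_i σ_{i+1} σ_i = σ_{i+1} σ_i σ_{i+1}
  {r | ∃ i j : Fin (n - 1), (i : ℕ) + 1 = (j : ℕ) ∧
      r = .of (.s i) * .of (.s j) * .of (.s i) *
        (.of (.s j) * .of (.s i) * .of (.s j))⁻¹} ∪
  -- c_i σ_j = σ_j c_i for j ≥ 2
  {r | ∃ (t : Bool) (i : Fin g) (j : Fin (n - 1)), 1 ≤ (j : ℕ) ∧
      r = .of (.c t i) * .of (.s j) * (.of (.s j) * .of (.c t i))⁻¹} ∪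
  -- c_i σ_1 c_i σ_1 = σ_1 c_i σ_1 c_i
  {r | ∃ (t : Bool) (i : Fin g) (h : 0 < n - 1),
      r = .of (.c t i) * .of (.s ⟨0, h⟩) * .of (.c t i) * .of (.s ⟨0, h⟩) *
        (.of (.s ⟨0, h⟩) * .of (.c t i) * .of (.s ⟨0, h⟩) * .of (.c t i))⁻¹} ∪
  -- a_i σ_1 b_i = σ_1 b_i σ_1 a_i σ_1
  {r | ∃ (i : Fin g) (h : 0 < n - 1),
      r = .of (.a i) * .of (.s ⟨0, h⟩) * .of (.b i) *
        (.of (.s ⟨0, h⟩) * .of (.b i) * .of (.s ⟨0, h⟩) * .of (.a i) * .of (.s ⟨0, h⟩))⁻¹} ∪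
  -- c_i σ_1⁻¹ c_j σ_1 = σ_1⁻¹ c_j σ_1 c_i for j < i
  {r | ∃ (t t' : Bool) (i j : Fin g) (h : 0 < n - 1), (j : ℕ) < (i : ℕ) ∧
      r = .of (.c t i) * (.of (.s ⟨0, h⟩))⁻¹ * .of (.c t' j) * .of (.s ⟨0, h⟩) *
        ((.of (.s ⟨0, h⟩))⁻¹ * .of (.c t' j) * .of (.s ⟨0, h⟩) * .of (.c t i))⁻¹}

/-- The braid group `B_n(Σ_g)` of the compact orientable genus-`g` surface with
one boundary component, as a presented group. -/
abbrev SurfBraidGroup (g n : ℕ) := PresentedGroup (surfBraidRels g n)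


open scoped commutatorElement

namespace SurfBraidProof

def dotZ {g : ℕ} (x y : Fin g → ℤ) : ℤ := ∑ i, x i * y i
@[simp] lemma dotZ_add_left {g : ℕ} (x x' y : Fin g → ℤ) :
    dotZ (x + x') y = dotZ x y + dotZ x' y := by
  simp [dotZ, add_mul, Finset.sum_add_distrib]
@[simp] lemma dotZ_add_right {g : ℕ} (x y y' : Fin g → ℤ) :
    dotZ x (y + y') = dotZ x y + dotZ x y' := by
  simp [dotZ, mul_add, Finset.sum_add_distrib]
@[simp] lemma dotZ_zero_left {g : ℕ} (y : Fin g → ℤ) : dotZ 0 y = 0 := by simp [dotZ]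
@[simp] lemma dotZ_zero_right {g : ℕ} (y : Fin g → ℤ) : dotZ y 0 = 0 := by simp [dotZ]
@[simp] lemma dotZ_neg_left {g : ℕ} (x y : Fin g → ℤ) : dotZ (-x) y = -dotZ x y := by
  simp [dotZ, Finset.sum_neg_distrib]
@[simp] lemma dotZ_neg_right {g : ℕ} (x y : Fin g → ℤ) : dotZ x (-y) = -dotZ x y := by
  simp [dotZ, Finset.sum_neg_distrib]
@[simp] lemma dotZ_single_left {g : ℕ} (i : Fin g) (y : Fin g → ℤ) :
    dotZ (Pi.single i 1) y = y i := by
  simp [dotZ, Pi.single_apply, ite_mul]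

@[ext] structure NM (g : ℕ) where
  al : Fin g → ℤ
  be : Fin g → ℤ
  z : ℤ

namespace NM
variable {g : ℕ}
instance : Mul (NM g) := ⟨fun x y => ⟨x.al + y.al, x.be + y.be, x.z + y.z + 2 * dotZ x.al y.be⟩⟩
instance : One (NM g) := ⟨⟨0, 0, 0⟩⟩
instance : Inv (NM g) := ⟨fun x => ⟨-x.al, -x.be, -x.z + 2 * dotZ x.al x.be⟩⟩
@[simp] lemma mul_al (x y : NM g) : (x * y).al = x.al + y.al := rfl
@[simp] lemma mul_be (x y : NM g) : (x * y).be = x.be + y.be := rfl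
@[simp] lemma mul_z (x y : NM g) : (x * y).z = x.z + y.z + 2 * dotZ x.al y.be := rfl
@[simp] lemma one_al : (1 : NM g).al = 0 := rfl
@[simp] lemma one_be : (1 : NM g).be = 0 := rfl
@[simp] lemma one_z : (1 : NM g).z = 0 := rfl
@[simp] lemma inv_al (x : NM g) : (x⁻¹).al = -x.al := rfl
@[simp] lemma inv_be (x : NM g) : (x⁻¹).be = -x.be := rfl
@[simp] lemma inv_z (x : NM g) : (x⁻¹).z = -x.z + 2 * dotZ x.al x.be := rfl
@[simp] lemma mk_al (a b : Fin g → ℤ) (c : ℤ) : (NM.mk a b c).al = a := rfl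
@[simp] lemma mk_be (a b : Fin g → ℤ) (c : ℤ) : (NM.mk a b c).be = b := rfl
@[simp] lemma mk_z (a b : Fin g → ℤ) (c : ℤ) : (NM.mk a b c).z = c := rfl
instance : Group (NM g) where
  mul_assoc x y zz := by ext <;> (simp; try ring)
  one_mul x := by ext <;> simp
  mul_one x := by ext <;> simp
  inv_mul_cancel x := by ext <;> (simp; try ring)

/-- Elements with trivial `al` and `be` are central. -/
lemma central_of_eq_zero {x : NM g} (h1 : x.al = 0) (h2 : x.be = 0) (y : NM g) :
    x * y = y * x := by
  ext <;> simp [h1, h2] <;> ring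

end NM

end SurfBraidProof

namespace SurfBraidProof

@[simp] lemma c_false {g n : ℕ} (i : Fin g) : (SurfGen.c false i : SurfGen g n) = .a i := rfl
@[simp] lemma c_true {g n : ℕ} (i : Fin g) : (SurfGen.c true i : SurfGen g n) = .b i := rfl

variable {g n : ℕ}

def nmGen : SurfGen g n → NM g
  | .a i => ⟨Pi.single i 1, 0, 0⟩
  | .b i => ⟨0, Pi.single i 1, 0⟩
  | .s _ => ⟨0, 0, 1⟩

@[simp] lemma nmGen_a (i : Fin g) : nmGen (SurfGen.a (n := n) i) = ⟨Pi.single i 1, 0, 0⟩ := rfl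
@[simp] lemma nmGen_b (i : Fin g) : nmGen (SurfGen.b (n := n) i) = ⟨0, Pi.single i 1, 0⟩ := rfl
@[simp] lemma nmGen_s (j : Fin (n-1)) : nmGen (SurfGen.s (g := g) j) = ⟨0, 0, 1⟩ := rfl

lemma nm_rels : ∀ r ∈ surfBraidRels g n, FreeGroup.lift nmGen r = 1 := by
  intro r hr
  rcases hr with (((((⟨i, j, hij, rfl⟩ | ⟨i, j, hij, rfl⟩) | ⟨t, i, j, hj, rfl⟩) |
    ⟨t, i, h, rfl⟩) | ⟨i, h, rfl⟩) | ⟨t, t', i, j, h, hij, rfl⟩)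
  · simp only [map_mul, map_inv, FreeGroup.lift_apply_of, nmGen_s]
    ext <;> (simp; try ring)
  · simp only [map_mul, map_inv, FreeGroup.lift_apply_of, nmGen_s]
    ext <;> (simp; try ring)
  · cases t <;>
      · simp only [c_false, c_true, map_mul, map_inv, FreeGroup.lift_apply_of, nmGen_a, nmGen_b,
          nmGen_s, mul_inv_eq_one]
        ext <;> (simp; try ring)
  · cases t <;>
      · simp only [c_false, c_true, map_mul, map_inv, FreeGroup.lift_apply_of, nmGen_a, nmGen_b,
          nmGen_s, mul_inv_eq_one]
        ext <;> (simp; try ring)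
  · simp only [map_mul, map_inv, FreeGroup.lift_apply_of, nmGen_a, nmGen_b, nmGen_s, mul_inv_eq_one]
    ext <;> (simp; try ring)
  · have hne : i ≠ j := by
      intro hh; rw [hh] at hij; exact lt_irrefl _ hij
    cases t <;> cases t' <;>
      · simp only [c_false, c_true, map_mul, map_inv, FreeGroup.lift_apply_of, nmGen_a, nmGen_b,
          nmGen_s, mul_inv_eq_one]
        ext <;> (simp [Pi.single_apply, hne, (Ne.symm hne)]; try ring)

def nmHom : SurfBraidGroup g n →* NM g := PresentedGroup.toGroup nm_rels

end SurfBraidProof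

namespace SurfBraidProof

lemma lcs_map_eq {G H : Type*} [Group G] [Group H] (f : G →* H) (hf : Function.Surjective f)
    (k : ℕ) : Subgroup.map f (Subgroup.lowerCentralSeries (⊤ : Subgroup G) k) = Subgroup.lowerCentralSeries (⊤ : Subgroup H) k := by
  induction k with
  | zero => simpa using Subgroup.map_top_of_surjective f hf
  | succ k ih =>
      show Subgroup.map f ⁅Subgroup.lowerCentralSeries (⊤ : Subgroup G) k, ⊤⁆ = ⁅Subgroup.lowerCentralSeries (⊤ : Subgroup H) k, ⊤⁆
      rw [Subgroup.map_commutator, ih, Subgroup.map_top_of_surjective f hf]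

section Quot

variable (g n : ℕ)

abbrev Gq := SurfBraidGroup g n ⧸ Subgroup.lowerCentralSeries (⊤ : Subgroup (SurfBraidGroup g n)) 2

def pq : SurfBraidGroup g n →* Gq g n := QuotientGroup.mk' _

lemma pq_surj : Function.Surjective (pq g n) := QuotientGroup.mk'_surjective _

def gq (x : SurfGen g n) : Gq g n :=
  pq g n (PresentedGroup.mk _ (FreeGroup.of x))

lemma lcs2_Gq : Subgroup.lowerCentralSeries (⊤ : Subgroup (Gq g n)) 2 = ⊥ := by
  rw [← lcs_map_eq (pq g n) (pq_surj g n) 2, eq_bot_iff]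
  rintro x ⟨y, hy, rfl⟩
  simp only [Subgroup.mem_bot]
  exact (QuotientGroup.eq_one_iff y).mpr hy

lemma comm_central (u v w : Gq g n) : ⁅u, v⁆ * w = w * ⁅u, v⁆ := by
  have h1 : ⁅u, v⁆ ∈ Subgroup.lowerCentralSeries (⊤ : Subgroup (Gq g n)) 1 := by
    rw [lowerCentralSeries_one, commutator_def]
    exact Subgroup.commutator_mem_commutator (Subgroup.mem_top u) (Subgroup.mem_top v)
  have h2 : ⁅⁅u, v⁆, w⁆ ∈ Subgroup.lowerCentralSeries (⊤ : Subgroup (Gq g n)) 2 :=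
    Subgroup.commutator_mem_commutator h1 (Subgroup.mem_top w)
  rw [lcs2_Gq, Subgroup.mem_bot] at h2
  exact commutatorElement_eq_one_iff_mul_comm.mp h2

lemma comm_conj (x y w : Gq g n) : w * ⁅x, y⁆ * w⁻¹ = ⁅x, y⁆ := by
  rw [← comm_central g n x y w]; group

lemma comm_mul_right (x y z : Gq g n) : ⁅x, y * z⁆ = ⁅x, y⁆ * ⁅x, z⁆ := by
  have h : ⁅x, y * z⁆ = ⁅x, y⁆ * (y * ⁅x, z⁆ * y⁻¹) := by
    simp only [commutatorElement_def]; group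
  rw [h, comm_conj]

lemma comm_inv_right (x y : Gq g n) : ⁅x, y⁻¹⁆ = ⁅x, y⁆⁻¹ := by
  have h : ⁅x, y⁻¹⁆ = y⁻¹ * ⁅y, x⁆ * y := by
    simp only [commutatorElement_def]; group
  have h2 := comm_conj g n y x y⁻¹
  rw [inv_inv] at h2
  rw [h, h2]
  exact (commutatorElement_inv x y).symm

lemma comm_mul_left (x y z : Gq g n) : ⁅x * y, z⁆ = ⁅x, z⁆ * ⁅y, z⁆ := by
  have h1 : ⁅x * y, z⁆ = ⁅z, x * y⁆⁻¹ := (commutatorElement_inv z (x * y)).symm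
  rw [h1, comm_mul_right, mul_inv_rev, commutatorElement_inv, commutatorElement_inv]
  exact (comm_central g n x z ⁅y, z⁆).symm

lemma comm_inv_left (x y : Gq g n) : ⁅x⁻¹, y⁆ = ⁅x, y⁆⁻¹ := by
  have h1 : ⁅x⁻¹, y⁆ = ⁅y, x⁻¹⁆⁻¹ := (commutatorElement_inv y x⁻¹).symm
  rw [h1, comm_inv_right, inv_inv, commutatorElement_inv]

lemma braid_eq {u v : Gq g n} (h : u * v * u = v * u * v) : u = v := by
  have e : u * v = ⁅u, v⁆ * (v * u) := by
    rw [commutatorElement_def]; group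
  have h2 : u * v * u = ⁅u, v⁆ * (v * (u * u)) := by
    calc u * v * u = (u * v) * u := by group
    _ = (⁅u, v⁆ * (v * u)) * u := by rw [e]
    _ = ⁅u, v⁆ * (v * (u * u)) := by group
  have h4 : v * u * v = ⁅u, v⁆ * (v * (v * u)) := by
    calc v * u * v = v * (u * v) := by group
    _ = v * (⁅u, v⁆ * (v * u)) := by rw [e]
    _ = (v * ⁅u, v⁆) * (v * u) := by group
    _ = (⁅u, v⁆ * v) * (v * u) := by rw [← comm_central g n u v v]
    _ = ⁅u, v⁆ * (v * (v * u)) := by group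
  rw [h2, h4] at h
  have h5 := mul_left_cancel (mul_left_cancel h)
  exact mul_right_cancel h5

lemma relq {r : FreeGroup (SurfGen g n)} (h : r ∈ surfBraidRels g n) :
    pq g n (PresentedGroup.mk _ r) = 1 := by
  have h2 : PresentedGroup.mk (surfBraidRels g n) r = 1 :=
    (QuotientGroup.eq_one_iff r).mpr (Subgroup.subset_normalClosure h)
  rw [h2, map_one]

lemma rel_braid (i j : Fin (n - 1)) (hij : (i : ℕ) + 1 = (j : ℕ)) :
    gq g n (.s i) * gq g n (.s j) * gq g n (.s i) =
      gq g n (.s j) * gq g n (.s i) * gq g n (.s j) := by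
  have h := relq g n (Or.inl (Or.inl (Or.inl (Or.inl (Or.inr ⟨i, j, hij, rfl⟩)))))
  simp only [map_mul, map_inv, mul_inv_eq_one] at h
  exact h

lemma rel3 (t : Bool) (i : Fin g) (j : Fin (n - 1)) (hj : 1 ≤ (j : ℕ)) :
    gq g n (.c t i) * gq g n (.s j) = gq g n (.s j) * gq g n (.c t i) := by
  have h := relq g n (Or.inl (Or.inl (Or.inl (Or.inr ⟨t, i, j, hj, rfl⟩))))
  simp only [map_mul, map_inv, mul_inv_eq_one] at h
  exact h

lemma rel5 (i : Fin g) (h0 : 0 < n - 1) :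
    gq g n (.a i) * gq g n (.s ⟨0, h0⟩) * gq g n (.b i) =
      gq g n (.s ⟨0, h0⟩) * gq g n (.b i) * gq g n (.s ⟨0, h0⟩) * gq g n (.a i) *
        gq g n (.s ⟨0, h0⟩) := by
  have h := relq g n (Or.inl (Or.inr ⟨i, h0, rfl⟩))
  simp only [map_mul, map_inv, mul_inv_eq_one] at h
  exact h

lemma rel6 (t t' : Bool) (i j : Fin g) (h0 : 0 < n - 1) (hij : (j : ℕ) < (i : ℕ)) :
    gq g n (.c t i) * (gq g n (.s ⟨0, h0⟩))⁻¹ * gq g n (.c t' j) * gq g n (.s ⟨0, h0⟩) =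
      (gq g n (.s ⟨0, h0⟩))⁻¹ * gq g n (.c t' j) * gq g n (.s ⟨0, h0⟩) * gq g n (.c t i) := by
  have h := relq g n (Or.inr ⟨t, t', i, j, h0, hij, rfl⟩)
  simp only [map_mul, map_inv, mul_inv_eq_one] at h
  exact h

lemma sg_eq (h0 : 0 < n - 1) (j : Fin (n - 1)) : gq g n (.s j) = gq g n (.s ⟨0, h0⟩) := by
  obtain ⟨m, hm⟩ := j
  induction m with
  | zero => rfl
  | succ k ih =>
      have hk : k < n - 1 := by omega
      have hb := rel_braid g n ⟨k, hk⟩ ⟨k + 1, hm⟩ rfl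
      rw [← braid_eq g n hb]
      exact ih hk

lemma cs_comm (hn : 3 ≤ n) (t : Bool) (i : Fin g) (h0 : 0 < n - 1) :
    gq g n (.c t i) * gq g n (.s ⟨0, h0⟩) = gq g n (.s ⟨0, h0⟩) * gq g n (.c t i) := by
  have h1 : (1 : ℕ) < n - 1 := by omega
  have h := rel3 g n t i ⟨1, h1⟩ (by simp)
  rwa [sg_eq g n h0 ⟨1, h1⟩] at h

lemma cc_comm (hn : 3 ≤ n) (t t' : Bool) (i j : Fin g) (hij : (j : ℕ) < (i : ℕ)) :
    gq g n (.c t i) * gq g n (.c t' j) = gq g n (.c t' j) * gq g n (.c t i) := by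
  have h0 : 0 < n - 1 := by omega
  set S := gq g n (.s ⟨0, h0⟩) with hS
  have hYS := cs_comm g n hn t' j h0
  have hfix : S⁻¹ * gq g n (.c t' j) * S = gq g n (.c t' j) := by
    rw [mul_assoc, hYS, ← mul_assoc, inv_mul_cancel, one_mul]
  have h := rel6 g n t t' i j h0 hij
  rw [show gq g n (.c t i) * S⁻¹ * gq g n (.c t' j) * S =
      gq g n (.c t i) * (S⁻¹ * gq g n (.c t' j) * S) by group,
    show S⁻¹ * gq g n (.c t' j) * S * gq g n (.c t i) =
      (S⁻¹ * gq g n (.c t' j) * S) * gq g n (.c t i) by group, hfix] at h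
  exact h

lemma ab_comm_sq (hn : 3 ≤ n) (i : Fin g) (h0 : 0 < n - 1) :
    ⁅gq g n (.a i), gq g n (.b i)⁆ = (gq g n (.s ⟨0, h0⟩)) ^ 2 := by
  set S := gq g n (.s ⟨0, h0⟩) with hSdef
  set A := gq g n (.a i) with hAdef
  set B := gq g n (.b i) with hBdef
  have hA : A * S = S * A := cs_comm g n hn false i h0
  have hB : B * S = S * B := cs_comm g n hn true i h0
  have h5 : A * S * B = S * B * S * A * S := rel5 g n i h0
  have lhs : S * (A * B) = A * S * B := by rw [← mul_assoc, ← hA]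
  have rhs : S * B * S * A * S = S * (S ^ 2 * (B * A)) := by
    calc S * B * S * A * S = S * B * S * (A * S) := by group
    _ = S * B * S * (S * A) := by rw [hA]
    _ = S * (B * S) * (S * A) := by group
    _ = S * (S * B) * (S * A) := by rw [hB]
    _ = S * S * (B * S) * A := by group
    _ = S * S * (S * B) * A := by rw [hB]
    _ = S * (S ^ 2 * (B * A)) := by rw [pow_two]; group
  have heq : S * (A * B) = S * (S ^ 2 * (B * A)) := by rw [lhs, h5, rhs]
  have hab : A * B = S ^ 2 * (B * A) := mul_left_cancel heq
  have : ⁅A, B⁆ = (A * B) * (B * A)⁻¹ := by rw [commutatorElement_def]; group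
  rw [this, hab, pow_two]; group

end Quot

end SurfBraidProof

namespace SurfBraidProof

section Quot2

variable (g n : ℕ)

/-- The central subgroup generated by `σ²` in `Gq`. -/
def Zc (h0 : 0 < n - 1) : Subgroup (Gq g n) :=
  Subgroup.zpowers ((gq g n (.s ⟨0, h0⟩)) ^ 2)

lemma cpair_mem (hn : 3 ≤ n) (h0 : 0 < n - 1) (t t' : Bool) (i j : Fin g) :
    ⁅gq g n (.c t i), gq g n (.c t' j)⁆ ∈ Zc g n h0 := by
  rcases lt_trichotomy (j : ℕ) (i : ℕ) with hlt | heq | hgt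
  · rw [commutatorElement_eq_one_iff_mul_comm.mpr (cc_comm g n hn t t' i j hlt)]
    exact one_mem _
  · have hij : i = j := Fin.ext heq.symm
    subst hij
    cases t <;> cases t'
    · rw [commutatorElement_self]; exact one_mem _
    · -- ⁅a i, b i⁆ = σ²
      rw [show (SurfGen.c false i : SurfGen g n) = .a i from rfl,
        show (SurfGen.c true i : SurfGen g n) = .b i from rfl,
        ab_comm_sq g n hn i h0]
      exact Subgroup.mem_zpowers _
    · -- ⁅b i, a i⁆ = (σ²)⁻¹
      rw [show (SurfGen.c true i : SurfGen g n) = .b i from rfl,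
        show (SurfGen.c false i : SurfGen g n) = .a i from rfl,
        ← commutatorElement_inv, ab_comm_sq g n hn i h0]
      exact Subgroup.inv_mem _ (Subgroup.mem_zpowers _)
    · rw [commutatorElement_self]; exact one_mem _
  · rw [commutatorElement_eq_one_iff_mul_comm.mpr (cc_comm g n hn t' t j i hgt).symm]
    exact one_mem _

lemma gen_comm_mem (hn : 3 ≤ n) (h0 : 0 < n - 1) (x y : SurfGen g n) :
    ⁅gq g n x, gq g n y⁆ ∈ Zc g n h0 := by
  have hcs : ∀ (t : Bool) (i : Fin g) (j : Fin (n - 1)),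
      gq g n (.c t i) * gq g n (.s j) = gq g n (.s j) * gq g n (.c t i) := by
    intro t i j
    rw [sg_eq g n h0 j]
    exact cs_comm g n hn t i h0
  cases x with
  | a i =>
      cases y with
      | a j => exact cpair_mem g n hn h0 false false i j
      | b j => exact cpair_mem g n hn h0 false true i j
      | s j =>
          have h1 : ⁅gq g n (.a i), gq g n (.s j)⁆ = (1 : Gq g n) :=
            commutatorElement_eq_one_iff_mul_comm.mpr (hcs false i j)
          rw [h1]; exact one_mem _
  | b i =>
      cases y with
      | a j => exact cpair_mem g n hn h0 true false i j
      | b j => exact cpair_mem g n hn h0 true true i j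
      | s j =>
          have h1 : ⁅gq g n (.b i), gq g n (.s j)⁆ = (1 : Gq g n) :=
            commutatorElement_eq_one_iff_mul_comm.mpr (hcs true i j)
          rw [h1]; exact one_mem _
  | s i =>
      cases y with
      | a j =>
          have h1 : ⁅gq g n (.s i), gq g n (.a j)⁆ = (1 : Gq g n) :=
            commutatorElement_eq_one_iff_mul_comm.mpr (hcs false j i).symm
          rw [h1]; exact one_mem _
      | b j =>
          have h1 : ⁅gq g n (.s i), gq g n (.b j)⁆ = (1 : Gq g n) :=
            commutatorElement_eq_one_iff_mul_comm.mpr (hcs true j i).symm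
          rw [h1]; exact one_mem _
      | s j =>
          rw [sg_eq g n h0 i, sg_eq g n h0 j, commutatorElement_self]
          exact one_mem _

lemma mem_closure_gq (x : Gq g n) : x ∈ Subgroup.closure (Set.range (gq g n)) := by
  obtain ⟨y, rfl⟩ := pq_surj g n x
  have : y ∈ Subgroup.comap (pq g n) (Subgroup.closure (Set.range (gq g n))) := by
    refine PresentedGroup.generated_by _ _ (fun j => ?_) y
    exact Subgroup.subset_closure ⟨j, rfl⟩
  exact this

lemma comm_mem_Zc (hn : 3 ≤ n) (h0 : 0 < n - 1) (x y : Gq g n) :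
    ⁅x, y⁆ ∈ Zc g n h0 := by
  refine Subgroup.closure_induction₂
    (p := fun x y _ _ => ⁅x, y⁆ ∈ Zc g n h0) ?_ ?_ ?_ ?_ ?_ ?_ ?_
    (mem_closure_gq g n x) (mem_closure_gq g n y)
  · rintro _ _ ⟨u, rfl⟩ ⟨v, rfl⟩
    exact gen_comm_mem g n hn h0 u v
  · intro x _
    rw [commutatorElement_one_left]; exact one_mem _
  · intro x _
    rw [commutatorElement_one_right]; exact one_mem _
  · intro x y z _ _ _ hx hy
    rw [comm_mul_left]; exact mul_mem hx hy
  · intro y z x _ _ _ hy hz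
    rw [comm_mul_right]; exact mul_mem hy hz
  · intro x y _ _ h
    rw [comm_inv_left]; exact inv_mem h
  · intro x y _ _ h
    rw [comm_inv_right]; exact inv_mem h

lemma lcs1_le_Zc (hn : 3 ≤ n) (h0 : 0 < n - 1) :
    Subgroup.lowerCentralSeries (⊤ : Subgroup (Gq g n)) 1 ≤ Zc g n h0 := by
  rw [lowerCentralSeries_one, commutator_def]
  exact Subgroup.commutator_le.mpr fun p _ q _ => comm_mem_Zc g n hn h0 p q

lemma pq_lcs1_mem (hn : 3 ≤ n) (h0 : 0 < n - 1) {x : SurfBraidGroup g n}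
    (hx : x ∈ Subgroup.lowerCentralSeries (⊤ : Subgroup (SurfBraidGroup g n)) 1) :
    pq g n x ∈ Zc g n h0 :=
  lcs1_le_Zc g n hn h0 (Subgroup.lowerCentralSeries.map (pq g n) 1 ⟨x, hx, rfl⟩)

end Quot2

section NMfacts

variable {g : ℕ}

def Zsub (g : ℕ) : Subgroup (NM g) where
  carrier := {x | x.al = 0 ∧ x.be = 0 ∧ Even x.z}
  one_mem' := ⟨rfl, rfl, Even.zero⟩
  mul_mem' := by
    rintro a b ⟨h1, h2, h3⟩ ⟨k1, k2, k3⟩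
    refine ⟨by simp [h1, k1], by simp [h2, k2], ?_⟩
    simp only [NM.mul_z, h1, dotZ_zero_left, mul_zero, add_zero]
    exact h3.add k3
  inv_mem' := by
    rintro a ⟨h1, h2, h3⟩
    refine ⟨by simp [h1], by simp [h2], ?_⟩
    simp only [NM.inv_z, h1, dotZ_zero_left, mul_zero, add_zero]
    exact h3.neg

lemma lcs1_NM_le : Subgroup.lowerCentralSeries (⊤ : Subgroup (NM g)) 1 ≤ Zsub g := by
  rw [lowerCentralSeries_one, commutator_def]
  refine Subgroup.commutator_le.mpr fun p _ q _ => ⟨?_, ?_, ?_⟩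
  · show (⁅p, q⁆).al = 0
    simp only [commutatorElement_def, NM.mul_al, NM.inv_al]
    abel
  · show (⁅p, q⁆).be = 0
    simp only [commutatorElement_def, NM.mul_be, NM.inv_be]
    abel
  · refine ⟨dotZ p.al q.be - dotZ q.al p.be, ?_⟩
    show (⁅p, q⁆).z = _
    simp only [commutatorElement_def, NM.mul_z, NM.inv_z, NM.mul_al, NM.mul_be, NM.inv_al,
      NM.inv_be, dotZ_add_left, dotZ_add_right, dotZ_neg_left, dotZ_neg_right]
    ring

lemma Zsub_le_center : Zsub g ≤ Subgroup.center (NM g) := by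
  rintro x ⟨h1, h2, -⟩
  exact Subgroup.mem_center_iff.mpr fun y => (NM.central_of_eq_zero h1 h2 y).symm

lemma lcs2_NM : Subgroup.lowerCentralSeries (⊤ : Subgroup (NM g)) 2 = ⊥ :=
  lowerCentralSeries_succ_eq_bot ⊤ (le_trans lcs1_NM_le Zsub_le_center)

end NMfacts

end SurfBraidProof

namespace SurfBraidProof

section Final

variable (g n : ℕ)

lemma nmHom_lcs1 {x : SurfBraidGroup g n}
    (hx : x ∈ Subgroup.lowerCentralSeries (⊤ : Subgroup (SurfBraidGroup g n)) 1) : nmHom x ∈ Zsub g :=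
  lcs1_NM_le (Subgroup.lowerCentralSeries.map (nmHom (g := g) (n := n)) 1 ⟨x, hx, rfl⟩)

lemma nmHom_lcs2 {x : SurfBraidGroup g n}
    (hx : x ∈ Subgroup.lowerCentralSeries (⊤ : Subgroup (SurfBraidGroup g n)) 2) : nmHom x = 1 := by
  have h := lowerCentralSeries.map (nmHom (g := g) (n := n)) 2 ⟨x, hx, rfl⟩
  rwa [lcs2_NM, Subgroup.mem_bot] at h

end Final

end SurfBraidProof


theorem stmt4 (g n : ℕ) (hg : 1 ≤ g) (hn : 3 ≤ n) :
    Nonempty ((↥(Subgroup.lowerCentralSeries (⊤ : Subgroup (SurfBraidGroup g n)) 1) ⧸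
      (Subgroup.lowerCentralSeries (⊤ : Subgroup (SurfBraidGroup g n)) 2).subgroupOf
        (Subgroup.lowerCentralSeries (⊤ : Subgroup (SurfBraidGroup g n)) 1)) ≃* Multiplicative ℤ) := by
  classical
  open SurfBraidProof in
  have h0 : 0 < n - 1 := by omega
  set G := SurfBraidGroup g n with hG
  set L1 := Subgroup.lowerCentralSeries (⊤ : Subgroup (SurfBraidGroup g n)) 1 with hL1
  set L2 := Subgroup.lowerCentralSeries (⊤ : Subgroup (SurfBraidGroup g n)) 2 with hL2
  have hg0 : 0 < g := hg
  set i0 : Fin g := ⟨0, hg0⟩ with hi0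
  set tA : G := PresentedGroup.mk _ (FreeGroup.of (SurfGen.a i0)) with htA
  set tB : G := PresentedGroup.mk _ (FreeGroup.of (SurfGen.b i0)) with htB
  set t : G := ⁅tA, tB⁆ with ht_def
  have ht : t ∈ L1 := by
    rw [hL1, lowerCentralSeries_one, commutator_def]
    exact Subgroup.commutator_mem_commutator (Subgroup.mem_top tA) (Subgroup.mem_top tB)
  -- the `z`-value of `t` under `nmHom` is `2`
  have hnmA : nmHom tA = NM.mk (Pi.single i0 1) 0 0 := PresentedGroup.toGroup.of nm_rels
  have hnmB : nmHom tB = NM.mk 0 (Pi.single i0 1) 0 := PresentedGroup.toGroup.of nm_rels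
  have hnmt : nmHom t = NM.mk 0 0 2 := by
    rw [ht_def, map_commutatorElement, hnmA, hnmB, commutatorElement_def]
    ext <;> simp
  -- the homomorphism ψ : L1 →* Multiplicative ℤ
  set ψ : ↥L1 →* Multiplicative ℤ :=
    { toFun := fun x => Multiplicative.ofAdd ((nmHom (x : G)).z / 2)
      map_one' := by simp
      map_mul' := by
        intro x y
        obtain ⟨ha1, -, u, hu⟩ := nmHom_lcs1 g n x.2
        obtain ⟨-, -, v, hv⟩ := nmHom_lcs1 g n y.2
        have hz : (nmHom ((x * y : ↥L1) : G)).z = (nmHom (x : G)).z + (nmHom (y : G)).z := by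
          rw [show ((x * y : ↥L1) : G) = (x : G) * (y : G) from rfl, map_mul, NM.mul_z, ha1,
            dotZ_zero_left, mul_zero, add_zero]
        show Multiplicative.ofAdd ((nmHom ((x * y : ↥L1) : G)).z / 2) =
          Multiplicative.ofAdd ((nmHom (x : G)).z / 2) *
            Multiplicative.ofAdd ((nmHom (y : G)).z / 2)
        rw [← ofAdd_add]
        congr 1
        rw [hz, hu, hv]
        omega } with hψ
  have hψt : ψ ⟨t, ht⟩ = Multiplicative.ofAdd (1 : ℤ) := by
    simp only [hψ, MonoidHom.coe_mk, OneHom.coe_mk, hnmt]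
    norm_num
  have hkill : ∀ x ∈ L2.subgroupOf L1, ψ x = 1 := by
    intro x hx
    have hx2 : (x : G) ∈ L2 := Subgroup.mem_subgroupOf.mp hx
    have h1 : nmHom (x : G) = 1 := nmHom_lcs2 g n hx2
    simp only [hψ, MonoidHom.coe_mk, OneHom.coe_mk, h1, NM.one_z]
    norm_num
  set χ : (↥L1 ⧸ L2.subgroupOf L1) →* Multiplicative ℤ :=
    QuotientGroup.lift (L2.subgroupOf L1) ψ (fun x hx => MonoidHom.mem_ker.mpr (hkill x hx)) with hχ
  set tQ : ↥L1 ⧸ L2.subgroupOf L1 := QuotientGroup.mk ⟨t, ht⟩ with htQ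
  have hχtQ : χ tQ = Multiplicative.ofAdd (1 : ℤ) := by
    rw [htQ, hχ, QuotientGroup.lift_mk', hψt]
  have hχtQk : ∀ k : ℤ, χ (tQ ^ k) = Multiplicative.ofAdd k := by
    intro k
    rw [map_zpow, hχtQ, ← ofAdd_zsmul]
    norm_num
  -- generation: every element of the quotient is a power of tQ
  have hpt : pq g n t = (gq g n (.s ⟨0, h0⟩)) ^ 2 := by
    rw [ht_def, map_commutatorElement]
    exact ab_comm_sq g n hn i0 h0
  have hgen : ∀ q : ↥L1 ⧸ L2.subgroupOf L1, ∃ k : ℤ, q = tQ ^ k := by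
    intro q
    refine QuotientGroup.induction_on q ?_
    intro x
    have hx : pq g n (x : G) ∈ Zc g n h0 := pq_lcs1_mem g n hn h0 x.2
    rw [Zc, ← hpt, Subgroup.mem_zpowers_iff] at hx
    obtain ⟨k, hk⟩ := hx
    refine ⟨k, ?_⟩
    have h2 : x⁻¹ * (⟨t, ht⟩ : ↥L1) ^ k ∈ L2.subgroupOf L1 := by
      rw [Subgroup.mem_subgroupOf]
      have hcoe : ((x⁻¹ * (⟨t, ht⟩ : ↥L1) ^ k : ↥L1) : G) = (x : G)⁻¹ * t ^ k := by
        push_cast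
        rfl
      rw [hcoe, ← QuotientGroup.ker_mk' L2, MonoidHom.mem_ker]
      show (pq g n) ((x : G)⁻¹ * t ^ k) = 1
      have heq2 : (pq g n) ((x : G)⁻¹ * t ^ k) = (pq g n (x : G))⁻¹ * (pq g n t) ^ k := by
        rw [map_mul, map_inv, map_zpow]
      rw [heq2, hk]
      simp
    calc QuotientGroup.mk x = QuotientGroup.mk ((⟨t, ht⟩ : ↥L1) ^ k) := by
          rw [QuotientGroup.eq]
          exact h2
    _ = tQ ^ k := by rw [htQ, QuotientGroup.mk_zpow]
  have hinj : Function.Injective χ := by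
    intro q1 q2 hq
    obtain ⟨k1, rfl⟩ := hgen q1
    obtain ⟨k2, rfl⟩ := hgen q2
    rw [hχtQk, hχtQk] at hq
    have : k1 = k2 := by exact_mod_cast Multiplicative.ofAdd.injective hq
    rw [this]
  have hsurj : Function.Surjective χ := by
    intro m
    exact ⟨tQ ^ (Multiplicative.toAdd m), by rw [hχtQk]; rfl⟩
  exact ⟨MulEquiv.ofBijective χ ⟨hinj, hsurj⟩⟩
end

section
/- Let g ≥ 1 and n ≥ 3. Then B_n(Σ_g) is not residually nilpotent; equivalently, the intersection ⋂_{i ≥ 1} Γ_i(B_n(Σ_g)) is not the trivial subgroup. -/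
private lemma swap_braid {α : Type*} [DecidableEq α] (a b c : α) (hab : a ≠ b) (hac : a ≠ c)
    (hbc : b ≠ c) :
    Equiv.swap a b * Equiv.swap b c * Equiv.swap a b
      = Equiv.swap b c * Equiv.swap a b * Equiv.swap b c := by
  have h1 := Equiv.swap_mul_swap_mul_swap (x := c) (y := b) (z := a) hbc.symm (Ne.symm hac)
  have h2 := Equiv.swap_mul_swap_mul_swap (x := a) (y := b) (z := c) hab hac
  rw [Equiv.swap_comm c b, Equiv.swap_comm b a] at h1
  rw [Equiv.swap_comm c a] at h2
  rw [h1, h2]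

private lemma swap_disj_comm {α : Type*} [DecidableEq α] (a b c d : α)
    (hac : a ≠ c) (had : a ≠ d) (hbc : b ≠ c) (hbd : b ≠ d) :
    Equiv.swap a b * Equiv.swap c d = Equiv.swap c d * Equiv.swap a b := by
  apply (Equiv.Perm.Disjoint.commute ?_).eq
  intro x
  rcases eq_or_ne x a with h1 | h1
  · right; rw [h1]; exact Equiv.swap_apply_of_ne_of_ne hac had
  rcases eq_or_ne x b with h2 | h2
  · right; rw [h2]; exact Equiv.swap_apply_of_ne_of_ne hbc hbd
  · left; exact Equiv.swap_apply_of_ne_of_ne h1 h2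

/-- The map sending `σ_j` to the transposition `(j-1, j)` and `a_i, b_i` to `1`. -/
private def surfPerm {g n : ℕ} : SurfGen g n → Equiv.Perm (Fin n)
  | .a _ => 1
  | .b _ => 1
  | .s j => Equiv.swap ⟨j, by have := j.isLt; omega⟩ ⟨j + 1, by have := j.isLt; omega⟩

private lemma surfPerm_c {g n : ℕ} (t : Bool) (i : Fin g) :
    (surfPerm (SurfGen.c t i) : Equiv.Perm (Fin n)) = 1 := by
  cases t <;> rfl

private lemma surfPerm_s {g n : ℕ} (j : Fin (n - 1)) :
    (surfPerm (g := g) (SurfGen.s j) : Equiv.Perm (Fin n))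
      = Equiv.swap ⟨j, by have := j.isLt; omega⟩ ⟨j + 1, by have := j.isLt; omega⟩ := rfl

private lemma surfPerm_rels {g n : ℕ} :
    ∀ r ∈ surfBraidRels g n, FreeGroup.lift surfPerm r = 1 := by
  rintro r (((((⟨i, j, hij, rfl⟩ | ⟨i, j, hij, rfl⟩) | ⟨t, i, j, hj, rfl⟩) | ⟨t, i, h, rfl⟩) |
      ⟨i, h, rfl⟩) | ⟨t, t', i, j, h, hji, rfl⟩) <;>
    simp only [map_mul, map_inv, FreeGroup.lift_apply_of, surfPerm_c, surfPerm_s, one_mul, mul_one,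
      inv_one]
  · -- disjoint commutation
    have hi := i.isLt; have hj := j.isLt
    rw [mul_inv_eq_one]
    refine swap_disj_comm _ _ _ _ ?_ ?_ ?_ ?_ <;> simp only [ne_eq, Fin.mk.injEq] <;> omega
  · -- braid relation
    rw [mul_inv_eq_one]
    obtain ⟨i, hi⟩ := i; obtain ⟨j, hj⟩ := j
    simp only at hij
    subst hij
    exact swap_braid (⟨i, by omega⟩ : Fin n) ⟨i + 1, by omega⟩ ⟨i + 1 + 1, by omega⟩
      (by simp only [ne_eq, Fin.mk.injEq]; omega) (by simp only [ne_eq, Fin.mk.injEq]; omega)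
      (by simp only [ne_eq, Fin.mk.injEq]; omega)
  · group
  · group
  · -- a σ b = σ b σ a σ maps to σ = σ³
    rw [mul_inv_eq_one]
    have key : ∀ s : Equiv.Perm (Fin n), s = Equiv.swap ⟨0, by omega⟩
        ⟨0 + 1, by have := h; omega⟩ → s = s * s * s := by
      rintro s rfl
      rw [mul_assoc, Equiv.swap_mul_self, mul_one]
    exact key _ rfl
  · group

open scoped commutatorElement

theorem stmt6 (g n : ℕ) (hg : 1 ≤ g) (hn : 3 ≤ n) :
    (⨅ i : ℕ, (⊤ : Subgroup (SurfBraidGroup g n)).lowerCentralSeries i) ≠ ⊥ := by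
  classical
  have h0 : 0 < n - 1 := by omega
  have h1 : 1 < n - 1 := by omega
  set x : SurfBraidGroup g n := PresentedGroup.of (.s ⟨0, h0⟩) with hx
  set y : SurfBraidGroup g n := PresentedGroup.of (.s ⟨1, h1⟩) with hy
  -- the braid relation in the quotient
  have hbraid : x * y * x = y * x * y := by
    have hmem : (FreeGroup.of (.s ⟨0, h0⟩) * FreeGroup.of (.s ⟨1, h1⟩) *
        FreeGroup.of (.s ⟨0, h0⟩) * (FreeGroup.of (.s ⟨1, h1⟩) * FreeGroup.of (.s ⟨0, h0⟩) *
        FreeGroup.of (.s ⟨1, h1⟩))⁻¹ : FreeGroup (SurfGen g n)) ∈ surfBraidRels g n :=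
      Or.inl (Or.inl (Or.inl (Or.inl (Or.inr ⟨⟨0, h0⟩, ⟨1, h1⟩, rfl, rfl⟩))))
    have hr : (PresentedGroup.mk (surfBraidRels g n))
        (FreeGroup.of (.s ⟨0, h0⟩) * FreeGroup.of (.s ⟨1, h1⟩) *
        FreeGroup.of (.s ⟨0, h0⟩) * (FreeGroup.of (.s ⟨1, h1⟩) * FreeGroup.of (.s ⟨0, h0⟩) *
        FreeGroup.of (.s ⟨1, h1⟩))⁻¹) = 1 :=
      (QuotientGroup.eq_one_iff _).mpr (Subgroup.subset_normalClosure hmem)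
    simp only [map_mul, map_inv, mul_inv_eq_one] at hr
    exact hr
  set t : SurfBraidGroup g n := y * x⁻¹ with hvt
  -- t lies in every term of the lower central series
  have ht : ∀ k : ℕ, t ∈ (⊤ : Subgroup (SurfBraidGroup g n)).lowerCentralSeries k := by
    intro k
    induction k with
    | zero => exact Subgroup.mem_top t
    | succ k ih =>
      have h2 : x * t * (x * x) = t * (x * x) * (t * x) := by
        have e1 : x * t * (x * x) = x * y * x := by rw [hvt]; group
        have e2 : t * (x * x) * (t * x) = y * x * y := by rw [hvt]; group
        rw [e1, e2, hbraid]
      have key : t⁻¹ * x * t * x⁻¹ = x * x * t * (x * x)⁻¹ := by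
        have h3 : t * (t⁻¹ * x * t * x⁻¹) * (x * x) * x
            = t * (x * x * t * (x * x)⁻¹) * (x * x) * x := by
          calc t * (t⁻¹ * x * t * x⁻¹) * (x * x) * x = x * t * (x * x) := by group
            _ = t * (x * x) * (t * x) := h2
            _ = t * (x * x * t * (x * x)⁻¹) * (x * x) * x := by group
        exact mul_left_cancel (mul_right_cancel (mul_right_cancel h3))
      have hu : ⁅t⁻¹, x⁆ ∈ (⊤ : Subgroup (SurfBraidGroup g n)).lowerCentralSeries (k + 1) :=
        Subgroup.commutator_mem_commutator (Subgroup.inv_mem _ ih) (Subgroup.mem_top x)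
      have hconj : (x * x)⁻¹ * ⁅t⁻¹, x⁆ * ((x * x)⁻¹)⁻¹
          ∈ (⊤ : Subgroup (SurfBraidGroup g n)).lowerCentralSeries (k + 1) :=
        Subgroup.Normal.conj_mem inferInstance _ hu _
      have heq : t = (x * x)⁻¹ * ⁅t⁻¹, x⁆ * ((x * x)⁻¹)⁻¹ := by
        rw [commutatorElement_def, inv_inv, key]
        group
      rw [heq]
      exact hconj
  -- t is nontrivial: use the homomorphism to the symmetric group
  have htne : t ≠ 1 := by
    intro habs
    have hyx : y = x := by
      have h' := habs
      rw [hvt, mul_inv_eq_one] at h'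
      exact h'
    have hphi := congrArg (PresentedGroup.toGroup (surfPerm_rels (g := g) (n := n))) hyx
    rw [hx, hy, PresentedGroup.toGroup.of, PresentedGroup.toGroup.of] at hphi
    have happ := congrArg (fun (e : Equiv.Perm (Fin n)) => e ⟨0, by omega⟩) hphi
    simp only [surfPerm_s] at happ
    rw [Equiv.swap_apply_of_ne_of_ne (by simp only [ne_eq, Fin.mk.injEq]; omega)
      (by simp only [ne_eq, Fin.mk.injEq]; omega), Equiv.swap_apply_left] at happ
    simp only [Fin.mk.injEq] at happ
    omega
  intro hbot
  have hmem : t ∈ (⨅ i : ℕ, (⊤ : Subgroup (SurfBraidGroup g n)).lowerCentralSeries i) :=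
    Subgroup.mem_iInf.mpr ht
  rw [hbot] at hmem
  exact htne (Subgroup.mem_bot.mp hmem)
end

section
/- Let g ≥ 1 and n ≥ 3. Then the quotient B_n(Σ_g)/Γ_3(B_n(Σ_g)) is isomorphic to G_g, via an isomorphism sending the class of each σ_i (1 ≤ i ≤ n−1) to σ and the classes of a_i and b_i to a_i and b_i respectively. -/
open scoped commutatorElement

/-- Generators of the group `G_g`: `a i`, `b i` for `i : Fin g`, and `s` (= σ). -/
inductive GGGen (g : ℕ) : Type
  | a : Fin g → GGGen g
  | b : Fin g → GGGen g
  | s : GGGen g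

/-- Relators of `G_g`: the generators commute pairwise except the pairs
`(a_i, b_i)`, and `[a_i, b_i] = σ²`. -/
def GgRels (g : ℕ) : Set (FreeGroup (GGGen g)) :=
  {r | ∃ x y : GGGen g, (∀ i : Fin g, ¬((x = .a i ∧ y = .b i) ∨ (x = .b i ∧ y = .a i))) ∧
      r = .of x * .of y * (.of x)⁻¹ * (.of y)⁻¹} ∪
  {r | ∃ i : Fin g,
      r = .of (.a i) * .of (.b i) * (.of (.a i))⁻¹ * (.of (.b i))⁻¹ * ((.of .s) ^ 2)⁻¹}

/-- The group `G_g`, as a presented group. -/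
abbrev GGroup (g : ℕ) := PresentedGroup (GgRels g)

/-! ### Auxiliary material for `stmt7` -/

section GenericGroup

variable {G : Type*} [Group G]

private lemma stmt7_conj {x c : G} (h : Commute c x) : x * c * x⁻¹ = c := by
  rw [← h.eq]; group

private lemma stmt7_comm4 {c s : G} (h : Commute c s) :
    c * s * c * s = s * c * s * c := by
  calc c * s * c * s = (c * s) * (c * s) := by group
    _ = (s * c) * (s * c) := by rw [h.eq]
    _ = s * c * s * c := by group

private lemma stmt7_shuffle {a b s : G} (ha : Commute a s) (hb : Commute b s) :
    s * b * s * a * s = s * (s * (s * (b * a))) := by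
  calc s * b * s * a * s = s * ((b * s) * (a * s)) := by group
    _ = s * ((s * b) * (s * a)) := by rw [hb.eq, ha.eq]
    _ = s * (s * ((b * s) * a)) := by group
    _ = s * (s * ((s * b) * a)) := by rw [hb.eq]
    _ = s * (s * (s * (b * a))) := by group

private lemma stmt7_rel5 {a b s : G} (ha : Commute a s) (hb : Commute b s)
    (hab : a * b * a⁻¹ * b⁻¹ = s * s) : a * s * b = s * b * s * a * s := by
  have e2 : a * b = s * (s * (b * a)) := by
    calc a * b = (a * b * a⁻¹ * b⁻¹) * (b * a) := by group
      _ = (s * s) * (b * a) := by rw [hab]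
      _ = s * (s * (b * a)) := by group
  calc a * s * b = (s * a) * b := by rw [ha.eq]
    _ = s * (a * b) := by group
    _ = s * (s * (s * (b * a))) := by rw [e2]
    _ = s * b * s * a * s := (stmt7_shuffle ha hb).symm

private lemma stmt7_rel5_inv {a b s : G} (ha : Commute a s) (hb : Commute b s)
    (h : a * s * b = s * b * s * a * s) : a * b * a⁻¹ * b⁻¹ = s * s := by
  have e1 : s * (a * b) = s * (s * (s * (b * a))) := by
    calc s * (a * b) = (s * a) * b := by group
      _ = (a * s) * b := by rw [← ha.eq]
      _ = a * s * b := by group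
      _ = s * b * s * a * s := h
      _ = s * (s * (s * (b * a))) := stmt7_shuffle ha hb
  have e2 : a * b = s * (s * (b * a)) := by
    have := mul_left_cancel e1
    rw [this]
  calc a * b * a⁻¹ * b⁻¹ = (a * b) * (a⁻¹ * b⁻¹) := by group
    _ = (s * (s * (b * a))) * (a⁻¹ * b⁻¹) := by rw [e2]
    _ = s * s := by group

private lemma stmt7_rel6 {x y s : G} (hy : Commute y s) (hxy : Commute x y) :
    x * s⁻¹ * y * s = s⁻¹ * y * s * x := by
  have hy' : y * s⁻¹ = s⁻¹ * y := hy.inv_right.eq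
  have h1 : x * s⁻¹ * y * s = x * y := by
    calc x * s⁻¹ * y * s = x * ((s⁻¹ * y) * s) := by group
      _ = x * ((y * s⁻¹) * s) := by rw [← hy']
      _ = x * y := by group
  have h2 : s⁻¹ * y * s * x = y * x := by
    calc s⁻¹ * y * s * x = ((s⁻¹ * y) * s) * x := by group
      _ = ((y * s⁻¹) * s) * x := by rw [← hy']
      _ = y * x := by group
  rw [h1, h2, hxy.eq]

private lemma stmt7_rel6_inv {x y s : G} (hx : Commute x s) (hy : Commute y s)
    (h : x * s⁻¹ * y * s = s⁻¹ * y * s * x) : Commute x y := by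
  have hy' : y * s⁻¹ = s⁻¹ * y := hy.inv_right.eq
  have h1 : x * s⁻¹ * y * s = x * y := by
    calc x * s⁻¹ * y * s = x * ((s⁻¹ * y) * s) := by group
      _ = x * ((y * s⁻¹) * s) := by rw [← hy']
      _ = x * y := by group
  have h2 : s⁻¹ * y * s * x = y * x := by
    calc s⁻¹ * y * s * x = ((s⁻¹ * y) * s) * x := by group
      _ = ((y * s⁻¹) * s) * x := by rw [← hy']
      _ = y * x := by group
  show x * y = y * x
  rw [← h1, h, h2]

private lemma stmt7_braid_eq {x y : G} (hc : Commute ⁅x, y⁆ y)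
    (h : x * y * x = y * x * y) : x = y := by
  have h2 : ⁅x, y⁆ * (y * (x * x)) = ⁅x, y⁆ * (y * (y * x)) := by
    have e1 : ⁅x, y⁆ * (y * (x * x)) = (x * y) * x := by
      rw [commutatorElement_def]; group
    have e2 : ⁅x, y⁆ * (y * (y * x)) = ((⁅x, y⁆ * y) * y) * x := by group
    rw [e1, h, e2, hc.eq, commutatorElement_def]
    group
  have h3 := mul_left_cancel h2
  have h4 := mul_left_cancel h3
  exact mul_right_cancel h4

end GenericGroup

private lemma stmt7_pg_rel_one {α : Type*} {rels : Set (FreeGroup α)} {r : FreeGroup α}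
    (h : r ∈ rels) : PresentedGroup.mk rels r = 1 :=
  (QuotientGroup.eq_one_iff r).mpr (Subgroup.subset_normalClosure h)

/-! ### Facts about `GGroup g` -/

section GG

variable {g : ℕ}

private lemma gg_commute {x y : GGGen g}
    (h : ∀ i : Fin g, ¬((x = .a i ∧ y = .b i) ∨ (x = .b i ∧ y = .a i))) :
    Commute (PresentedGroup.of (rels := GgRels g) x) (PresentedGroup.of y) := by
  have h1 : PresentedGroup.mk (GgRels g)
      (.of x * .of y * (.of x)⁻¹ * (.of y)⁻¹) = 1 :=
    stmt7_pg_rel_one (Set.mem_union_left _ ⟨x, y, h, rfl⟩)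
  simp only [map_mul, map_inv] at h1
  rw [← commutatorElement_eq_one_iff_commute, commutatorElement_def]
  exact h1

private lemma gg_a_s (i : Fin g) :
    Commute (PresentedGroup.of (rels := GgRels g) (.a i)) (PresentedGroup.of .s) :=
  gg_commute (by rintro k (⟨_, h2⟩ | ⟨_, h2⟩) <;> exact nomatch h2)

private lemma gg_b_s (i : Fin g) :
    Commute (PresentedGroup.of (rels := GgRels g) (.b i)) (PresentedGroup.of .s) :=
  gg_commute (by rintro k (⟨_, h2⟩ | ⟨_, h2⟩) <;> exact nomatch h2)

private lemma gg_s_gen (y : GGGen g) :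
    Commute (PresentedGroup.of (rels := GgRels g) .s) (PresentedGroup.of y) :=
  gg_commute (by rintro k (⟨h1, _⟩ | ⟨h1, _⟩) <;> exact nomatch h1)

private lemma gg_ne' {i j : Fin g} (hne : i ≠ j) (x y : GGGen g)
    (hx : x = .a i ∨ x = .b i) (hy : y = .a j ∨ y = .b j) :
    Commute (PresentedGroup.of (rels := GgRels g) x) (PresentedGroup.of y) := by
  apply gg_commute
  intro k
  rcases hx with rfl | rfl <;> rcases hy with rfl | rfl <;>
    rintro (⟨h1, h2⟩ | ⟨h1, h2⟩) <;>
    first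
      | (cases h1; done)
      | (cases h2; done)
      | (injection h1 with e1; injection h2 with e2; exact hne (e1.trans e2.symm))

private lemma gg_ab (i : Fin g) :
    PresentedGroup.of (rels := GgRels g) (.a i) * PresentedGroup.of (.b i) *
      (PresentedGroup.of (.a i))⁻¹ * (PresentedGroup.of (.b i))⁻¹ =
      PresentedGroup.of .s * PresentedGroup.of .s := by
  have h1 : PresentedGroup.mk (GgRels g)
      (.of (.a i) * .of (.b i) * (.of (.a i))⁻¹ * (.of (.b i))⁻¹ *
        ((.of .s) ^ 2)⁻¹) = 1 :=
    stmt7_pg_rel_one (Set.mem_union_right _ ⟨i, rfl⟩)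
  simp only [map_mul, map_inv, map_pow] at h1
  rw [mul_inv_eq_one, pow_two] at h1
  exact h1

private lemma gg_s_central (x : GGroup g) :
    Commute (PresentedGroup.of (rels := GgRels g) .s) x := by
  have hx : x ∈ Subgroup.centralizer {(PresentedGroup.of (rels := GgRels g) .s)} := by
    refine PresentedGroup.generated_by _ _ (fun y => ?_) x
    rw [Subgroup.mem_centralizer_iff]
    intro h hh
    rw [Set.mem_singleton_iff] at hh
    subst hh
    exact (gg_s_gen y).eq
  exact Subgroup.mem_centralizer_iff.mp hx _ (Set.mem_singleton _)

private lemma gg_s_mem_center :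
    (PresentedGroup.of (rels := GgRels g) .s) ∈ Subgroup.center (GGroup g) :=
  Subgroup.mem_center_iff.mpr fun x => ((gg_s_central x).symm).eq

private lemma gg_comm_mem_center (x y : GGroup g) :
    ⁅x, y⁆ ∈ Subgroup.center (GGroup g) := by
  set Z := Subgroup.center (GGroup g) with hZ
  set p := QuotientGroup.mk' Z with hp
  have comm_ab : ∀ i : Fin g,
      Commute (p (PresentedGroup.of (.a i))) (p (PresentedGroup.of (.b i))) := by
    intro i
    rw [← commutatorElement_eq_one_iff_commute, ← map_commutatorElement]
    apply (QuotientGroup.eq_one_iff _).mpr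
    rw [commutatorElement_def, gg_ab]
    exact Z.mul_mem gg_s_mem_center gg_s_mem_center
  have hgen : ∀ (u : GGGen g) (x : GGroup g),
      Commute (p (PresentedGroup.of u)) (p x) := by
    intro u x
    have hx : x ∈ (Subgroup.centralizer {p (PresentedGroup.of u)}).comap p := by
      refine PresentedGroup.generated_by _ _ (fun v => ?_) x
      rw [Subgroup.mem_comap, Subgroup.mem_centralizer_iff]
      intro h hh
      rw [Set.mem_singleton_iff] at hh
      subst hh
      by_cases hc : ∃ i : Fin g, (u = .a i ∧ v = .b i) ∨ (u = .b i ∧ v = .a i)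
      · obtain ⟨i, h' | h'⟩ := hc <;> obtain ⟨rfl, rfl⟩ := h'
        · exact (comm_ab i).eq
        · exact ((comm_ab i).symm).eq
      · rw [not_exists] at hc
        exact ((gg_commute hc).map p).eq
    exact Subgroup.mem_centralizer_iff.mp (Subgroup.mem_comap.mp hx) _ (Set.mem_singleton _)
  have hcom : Commute (p x) (p y) := by
    have hx : x ∈ (Subgroup.centralizer {p y}).comap p := by
      refine PresentedGroup.generated_by _ _ (fun u => ?_) x
      rw [Subgroup.mem_comap, Subgroup.mem_centralizer_iff]
      intro h hh
      rw [Set.mem_singleton_iff] at hh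
      subst hh
      exact ((hgen u y).symm).eq
    have h1 := Subgroup.mem_centralizer_iff.mp (Subgroup.mem_comap.mp hx) _ (Set.mem_singleton _)
    exact (show Commute (p y) (p x) from h1).symm
  have h1 : p ⁅x, y⁆ = 1 := by
    rw [map_commutatorElement]
    exact commutatorElement_eq_one_iff_commute.mpr hcom
  exact (QuotientGroup.eq_one_iff _).mp h1

private lemma gg_lcs2 : (⊤ : Subgroup (GGroup g)).lowerCentralSeries 2 = ⊥ := by
  apply Subgroup.lowerCentralSeries_succ_eq_bot (n := 1)
  rw [Subgroup.top_lowerCentralSeries_one, commutator_def]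
  exact Subgroup.commutator_le.mpr fun p _ q _ => gg_comm_mem_center p q

end GG

/-! ### The forward homomorphism -/

private def stmt7F (g n : ℕ) : SurfGen g n → GGroup g
  | .a i => PresentedGroup.of (.a i)
  | .b i => PresentedGroup.of (.b i)
  | .s _ => PresentedGroup.of .s

private lemma stmt7F_rels (g n : ℕ) :
    ∀ r ∈ surfBraidRels g n, FreeGroup.lift (stmt7F g n) r = 1 := by
  rintro r (((((⟨i, j, hij, rfl⟩ | ⟨i, j, hij, rfl⟩) | ⟨t, i, j, hj, rfl⟩) |
    ⟨t, i, h0, rfl⟩) | ⟨i, h0, rfl⟩) | ⟨t, t', i, j, h0, hji, rfl⟩)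
  · simp only [map_mul, map_inv, FreeGroup.lift_apply_of, stmt7F]; group
  · simp only [map_mul, map_inv, FreeGroup.lift_apply_of, stmt7F]; group
  · simp only [map_mul, map_inv, FreeGroup.lift_apply_of, stmt7F]
    rw [mul_inv_eq_one]
    cases t
    · exact (gg_a_s i).eq
    · exact (gg_b_s i).eq
  · simp only [map_mul, map_inv, FreeGroup.lift_apply_of, stmt7F]
    rw [mul_inv_eq_one]
    cases t
    · exact stmt7_comm4 (gg_a_s i)
    · exact stmt7_comm4 (gg_b_s i)
  · simp only [map_mul, map_inv, FreeGroup.lift_apply_of, stmt7F]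
    rw [mul_inv_eq_one]
    exact stmt7_rel5 (gg_a_s i) (gg_b_s i) (gg_ab i)
  · simp only [map_mul, map_inv, FreeGroup.lift_apply_of]
    rw [mul_inv_eq_one]
    have hne : i ≠ j := Fin.ne_of_val_ne (Nat.ne_of_gt hji)
    have hxy : Commute (stmt7F g n (.c t i)) (stmt7F g n (.c t' j)) := by
      cases t <;> cases t'
      · exact gg_ne' hne _ _ (Or.inl rfl) (Or.inl rfl)
      · exact gg_ne' hne _ _ (Or.inl rfl) (Or.inr rfl)
      · exact gg_ne' hne _ _ (Or.inr rfl) (Or.inl rfl)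
      · exact gg_ne' hne _ _ (Or.inr rfl) (Or.inr rfl)
    have hy : Commute (stmt7F g n (.c t' j)) (stmt7F g n (.s ⟨0, h0⟩)) := by
      cases t'
      · exact gg_a_s j
      · exact gg_b_s j
    exact stmt7_rel6 hy hxy

private def stmt7phi0 (g n : ℕ) : SurfBraidGroup g n →* GGroup g :=
  PresentedGroup.toGroup (stmt7F_rels g n)

/-! ### Facts about the quotient of the surface braid group -/

private abbrev stmt7QB (g n : ℕ) :=
  SurfBraidGroup g n ⧸ (⊤ : Subgroup (SurfBraidGroup g n)).lowerCentralSeries 2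

private def stmt7qE (g n : ℕ) : FreeGroup (SurfGen g n) →* stmt7QB g n :=
  (QuotientGroup.mk' ((⊤ : Subgroup (SurfBraidGroup g n)).lowerCentralSeries 2)).comp
    (PresentedGroup.mk (surfBraidRels g n))

section QB

variable {g n : ℕ}

private lemma q_comm_central (x y z : stmt7QB g n) : Commute ⁅x, y⁆ z := by
  obtain ⟨a, rfl⟩ := QuotientGroup.mk'_surjective _ x
  obtain ⟨b, rfl⟩ := QuotientGroup.mk'_surjective _ y
  obtain ⟨c, rfl⟩ := QuotientGroup.mk'_surjective _ z
  rw [← commutatorElement_eq_one_iff_commute, ← map_commutatorElement,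
    ← map_commutatorElement]
  apply (QuotientGroup.eq_one_iff _).mpr
  show ⁅⁅a, b⁆, c⁆ ∈ ⁅(⊤ : Subgroup (SurfBraidGroup g n)).lowerCentralSeries 1, ⊤⁆
  exact Subgroup.commutator_mem_commutator
    (show ⁅a, b⁆ ∈ ⁅(⊤ : Subgroup (SurfBraidGroup g n)), ⊤⁆ from
      Subgroup.commutator_mem_commutator (Subgroup.mem_top a) (Subgroup.mem_top b))
    (Subgroup.mem_top c)

private lemma q_rel_one {r : FreeGroup (SurfGen g n)} (h : r ∈ surfBraidRels g n) :
    stmt7qE g n r = 1 := by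
  rw [stmt7qE, MonoidHom.comp_apply, stmt7_pg_rel_one h, map_one]

private lemma q_braid (i j : Fin (n - 1)) (hij : (i : ℕ) + 1 = (j : ℕ)) :
    stmt7qE g n (.of (.s i)) = stmt7qE g n (.of (.s j)) := by
  have h := q_rel_one (g := g) (n := n) (Set.mem_union_left _ (Set.mem_union_left _ (Set.mem_union_left _
    (Set.mem_union_left _ (Set.mem_union_right _ ⟨i, j, hij, rfl⟩)))))
  simp only [map_mul, map_inv] at h
  rw [mul_inv_eq_one] at h
  exact stmt7_braid_eq (q_comm_central _ _ _) h

private lemma q_s_eq (h0 : 0 < n - 1) (j : Fin (n - 1)) :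
    stmt7qE g n (.of (.s j)) = stmt7qE g n (.of (.s ⟨0, h0⟩)) := by
  suffices H : ∀ m (hm : m < n - 1),
      stmt7qE g n (.of (.s ⟨m, hm⟩)) = stmt7qE g n (.of (.s ⟨0, h0⟩)) by
    have := H j.1 j.2
    rwa [Fin.eta] at this
  intro m
  induction m with
  | zero => intro hm; rfl
  | succ k ih =>
    intro hm
    have hk : k < n - 1 := Nat.lt_of_succ_lt hm
    rw [← q_braid ⟨k, hk⟩ ⟨k + 1, hm⟩ rfl]
    exact ih hk

private lemma q_cs (hn : 3 ≤ n) (t : Bool) (i : Fin g) (h0 : 0 < n - 1) :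
    Commute (stmt7qE g n (.of (.c t i))) (stmt7qE g n (.of (.s ⟨0, h0⟩))) := by
  have h1 : 1 < n - 1 := by omega
  have h := q_rel_one (g := g) (n := n) (Set.mem_union_left _ (Set.mem_union_left _
    (Set.mem_union_left _ (Set.mem_union_right _ ⟨t, i, ⟨1, h1⟩, le_refl 1, rfl⟩))))
  simp only [map_mul, map_inv] at h
  rw [mul_inv_eq_one] at h
  have e : stmt7qE g n (.of (.s ⟨1, h1⟩)) = stmt7qE g n (.of (.s ⟨0, h0⟩)) :=
    q_s_eq h0 ⟨1, h1⟩
  rw [e] at h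
  exact h

private lemma q_cc (hn : 3 ≤ n) (t t' : Bool) {i j : Fin g} (hji : (j : ℕ) < (i : ℕ)) :
    Commute (stmt7qE g n (.of (.c t i))) (stmt7qE g n (.of (.c t' j))) := by
  have h0 : 0 < n - 1 := by omega
  have h := q_rel_one (g := g) (n := n) (Set.mem_union_right _
    ⟨t, t', i, j, h0, hji, rfl⟩)
  simp only [map_mul, map_inv] at h
  rw [mul_inv_eq_one] at h
  exact stmt7_rel6_inv (q_cs hn t i h0) (q_cs hn t' j h0) h

private lemma q_cc_ne (hn : 3 ≤ n) (t t' : Bool) {i j : Fin g} (hne : i ≠ j) :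
    Commute (stmt7qE g n (.of (.c t i))) (stmt7qE g n (.of (.c t' j))) := by
  rcases Nat.lt_trichotomy (j : ℕ) (i : ℕ) with h | h | h
  · exact q_cc hn t t' h
  · exact absurd (Fin.ext h).symm hne
  · exact (q_cc hn t' t h).symm

private lemma q_ab (hn : 3 ≤ n) (i : Fin g) (h0 : 0 < n - 1) :
    stmt7qE g n (.of (.a i)) * stmt7qE g n (.of (.b i)) *
      (stmt7qE g n (.of (.a i)))⁻¹ * (stmt7qE g n (.of (.b i)))⁻¹ =
      stmt7qE g n (.of (.s ⟨0, h0⟩)) * stmt7qE g n (.of (.s ⟨0, h0⟩)) := by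
  have h := q_rel_one (g := g) (n := n) (Set.mem_union_left _
    (Set.mem_union_right _ ⟨i, h0, rfl⟩))
  simp only [map_mul, map_inv] at h
  rw [mul_inv_eq_one] at h
  exact stmt7_rel5_inv (q_cs hn false i h0) (q_cs hn true i h0) h

end QB

/-! ### The inverse homomorphism -/

private def stmt7G (g n : ℕ) (h0 : 0 < n - 1) : GGGen g → stmt7QB g n
  | .a i => stmt7qE g n (.of (.a i))
  | .b i => stmt7qE g n (.of (.b i))
  | .s => stmt7qE g n (.of (.s ⟨0, h0⟩))

private lemma stmt7G_rels (g n : ℕ) (hn : 3 ≤ n) (h0 : 0 < n - 1) :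
    ∀ r ∈ GgRels g, FreeGroup.lift (stmt7G g n h0) r = 1 := by
  rintro r (⟨x, y, hcond, rfl⟩ | ⟨i, rfl⟩)
  · simp only [map_mul, map_inv, FreeGroup.lift_apply_of]
    rw [← commutatorElement_def, commutatorElement_eq_one_iff_commute]
    cases x with
    | a i =>
      cases y with
      | a j =>
        by_cases hne : i = j
        · subst hne; exact Commute.refl _
        · exact q_cc_ne hn false false hne
      | b j =>
        have hne : i ≠ j := by rintro rfl; exact hcond i (Or.inl ⟨rfl, rfl⟩)
        exact q_cc_ne hn false true hne
      | s => exact q_cs hn false i h0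
    | b i =>
      cases y with
      | a j =>
        have hne : i ≠ j := by rintro rfl; exact hcond i (Or.inr ⟨rfl, rfl⟩)
        exact q_cc_ne hn true false hne
      | b j =>
        by_cases hne : i = j
        · subst hne; exact Commute.refl _
        · exact q_cc_ne hn true true hne
      | s => exact q_cs hn true i h0
    | s =>
      cases y with
      | a j => exact (q_cs hn false j h0).symm
      | b j => exact (q_cs hn true j h0).symm
      | s => exact Commute.refl _
  · simp only [map_mul, map_inv, map_pow, FreeGroup.lift_apply_of]
    rw [mul_inv_eq_one, pow_two]
    exact q_ab hn i h0

private def stmt7psi (g n : ℕ) (hn : 3 ≤ n) (h0 : 0 < n - 1) :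
    GGroup g →* stmt7QB g n :=
  PresentedGroup.toGroup (stmt7G_rels g n hn h0)

/-! ### The descended forward homomorphism -/

private lemma stmt7_ker (g n : ℕ) :
    (⊤ : Subgroup (SurfBraidGroup g n)).lowerCentralSeries 2 ≤ (stmt7phi0 g n).ker := by
  intro x hx
  have h1 : stmt7phi0 g n x ∈
      Subgroup.map (stmt7phi0 g n) ((⊤ : Subgroup (SurfBraidGroup g n)).lowerCentralSeries 2) :=
    Subgroup.mem_map_of_mem _ hx
  have h2 : Subgroup.map (stmt7phi0 g n) ((⊤ : Subgroup (SurfBraidGroup g n)).lowerCentralSeries 2) ≤ ⊥ := by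
    rw [← gg_lcs2 (g := g)]
    have e2 : (⊤ : Subgroup (SurfBraidGroup g n)).lowerCentralSeries 2 =
        ⁅(⊤ : Subgroup (SurfBraidGroup g n)).lowerCentralSeries 1, ⊤⁆ := rfl
    have e2' : (⊤ : Subgroup (GGroup g)).lowerCentralSeries 2 =
        ⁅(⊤ : Subgroup (GGroup g)).lowerCentralSeries 1, ⊤⁆ := rfl
    have e1 : (⊤ : Subgroup (SurfBraidGroup g n)).lowerCentralSeries 1 =
        ⁅(⊤ : Subgroup (SurfBraidGroup g n)), ⊤⁆ := rfl
    have e1' : (⊤ : Subgroup (GGroup g)).lowerCentralSeries 1 =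
        ⁅(⊤ : Subgroup (GGroup g)), ⊤⁆ := rfl
    rw [e2, e2', Subgroup.map_commutator]
    refine Subgroup.commutator_mono ?_ le_top
    rw [e1, e1', Subgroup.map_commutator]
    exact Subgroup.commutator_mono le_top le_top
  exact MonoidHom.mem_ker.mpr (Subgroup.mem_bot.mp (h2 h1))

private def stmt7phi' (g n : ℕ) : stmt7QB g n →* GGroup g :=
  QuotientGroup.lift _ (stmt7phi0 g n) (stmt7_ker g n)

private lemma stmt7phi'_mk (g n : ℕ) (y : SurfBraidGroup g n) :
    stmt7phi' g n (QuotientGroup.mk y) = stmt7phi0 g n y := rfl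

private lemma stmt7qE_of (g n : ℕ) (x : SurfGen g n) :
    stmt7qE g n (.of x) = QuotientGroup.mk (PresentedGroup.of x) := rfl

theorem stmt7 (g n : ℕ) (hg : 1 ≤ g) (hn : 3 ≤ n) :
    ∃ φ : (SurfBraidGroup g n ⧸ (⊤ : Subgroup (SurfBraidGroup g n)).lowerCentralSeries 2) ≃* GGroup g,
      (∀ j : Fin (n - 1),
        φ (QuotientGroup.mk (PresentedGroup.of (SurfGen.s j))) = PresentedGroup.of GGGen.s) ∧
      (∀ i : Fin g,
        φ (QuotientGroup.mk (PresentedGroup.of (SurfGen.a i))) = PresentedGroup.of (GGGen.a i)) ∧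
      (∀ i : Fin g,
        φ (QuotientGroup.mk (PresentedGroup.of (SurfGen.b i))) = PresentedGroup.of (GGGen.b i)) := by
  have h0 : 0 < n - 1 := by omega
  have h1 : (stmt7psi g n hn h0).comp (stmt7phi' g n) = MonoidHom.id (stmt7QB g n) := by
    apply QuotientGroup.monoidHom_ext
    apply PresentedGroup.ext
    intro x
    simp only [MonoidHom.comp_apply, MonoidHom.id_apply, QuotientGroup.mk'_apply]
    rw [stmt7phi'_mk]
    rw [show stmt7phi0 g n (PresentedGroup.of x) = stmt7F g n x from PresentedGroup.toGroup.of (stmt7F_rels g n)]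
    cases x with
    | a i =>
      rw [show stmt7F g n (.a i) = PresentedGroup.of (.a i) from rfl]
      rw [show stmt7psi g n hn h0 (PresentedGroup.of (.a i)) = stmt7G g n h0 (.a i) from
        PresentedGroup.toGroup.of _]
      rfl
    | b i =>
      rw [show stmt7F g n (.b i) = PresentedGroup.of (.b i) from rfl]
      rw [show stmt7psi g n hn h0 (PresentedGroup.of (.b i)) = stmt7G g n h0 (.b i) from
        PresentedGroup.toGroup.of _]
      rfl
    | s j =>
      rw [show stmt7F g n (.s j) = PresentedGroup.of .s from rfl]
      rw [show stmt7psi g n hn h0 (PresentedGroup.of .s) = stmt7G g n h0 .s from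
        PresentedGroup.toGroup.of _]
      exact ((q_s_eq h0 j).symm)
  have h2 : (stmt7phi' g n).comp (stmt7psi g n hn h0) = MonoidHom.id (GGroup g) := by
    refine PresentedGroup.ext fun x => ?_
    simp only [MonoidHom.comp_apply, MonoidHom.id_apply]
    rw [show stmt7psi g n hn h0 (PresentedGroup.of x) = stmt7G g n h0 x from
      PresentedGroup.toGroup.of _]
    cases x with
    | a i =>
      show stmt7phi' g n (stmt7qE g n (.of (.a i))) = _
      rw [stmt7qE_of, stmt7phi'_mk]
      exact PresentedGroup.toGroup.of (stmt7F_rels g n)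
    | b i =>
      show stmt7phi' g n (stmt7qE g n (.of (.b i))) = _
      rw [stmt7qE_of, stmt7phi'_mk]
      exact PresentedGroup.toGroup.of (stmt7F_rels g n)
    | s =>
      show stmt7phi' g n (stmt7qE g n (.of (.s ⟨0, h0⟩))) = _
      rw [stmt7qE_of, stmt7phi'_mk]
      exact PresentedGroup.toGroup.of (stmt7F_rels g n)
  refine ⟨MonoidHom.toMulEquiv (stmt7phi' g n) (stmt7psi g n hn h0) h1 h2, ?_, ?_, ?_⟩
  · intro j
    show stmt7phi' g n (QuotientGroup.mk (PresentedGroup.of (SurfGen.s j))) = _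
    rw [stmt7phi'_mk]
    exact PresentedGroup.toGroup.of (stmt7F_rels g n)
  · intro i
    show stmt7phi' g n (QuotientGroup.mk (PresentedGroup.of (SurfGen.a i))) = _
    rw [stmt7phi'_mk]
    exact PresentedGroup.toGroup.of (stmt7F_rels g n)
  · intro i
    show stmt7phi' g n (QuotientGroup.mk (PresentedGroup.of (SurfGen.b i))) = _
    rw [stmt7phi'_mk]
    exact PresentedGroup.toGroup.of (stmt7F_rels g n)
end

section
/- Let g ≥ 1. The group G_g is isomorphic to the semidirect product (ℤ × ℤ^g) ⋊_φ ℤ^g, where φ(n) sends (p, m) ∈ ℤ × ℤ^g to (p − 2∑_{j=1}^g n_j m_j, m); under this isomorphism σ corresponds to a generator of the central factor ℤ, a_1,…,a_g to the standard basis of the second factor ℤ^g, and b_1,…,b_g to the standard basis of the acting factor ℤ^g. In particular G_g is a central extension of ℤ^{2g} by ℤ. -/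
/-- For `n ∈ ℤ^g`, the additive automorphism of `ℤ × ℤ^g` sending
`(p, m)` to `(p - 2∑ⱼ nⱼmⱼ, m)`. -/
def ggTwist (g : ℕ) (n : Fin g → ℤ) : (ℤ × (Fin g → ℤ)) ≃+ (ℤ × (Fin g → ℤ)) where
  toFun x := (x.1 - 2 * ∑ j, n j * x.2 j, x.2)
  invFun x := (x.1 + 2 * ∑ j, n j * x.2 j, x.2)
  left_inv x := by ext <;> simp
  right_inv x := by ext <;> simp
  map_add' x y := by
    ext
    · simp [Finset.sum_add_distrib, mul_add]; ring
    · simp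

/-- The action of `ℤ^g` on `ℤ × ℤ^g` defining the semidirect product
`(ℤ × ℤ^g) ⋊ ℤ^g`, written multiplicatively. -/
def ggTwistHom (g : ℕ) :
    Multiplicative (Fin g → ℤ) →* MulAut (Multiplicative (ℤ × (Fin g → ℤ))) where
  toFun n := AddEquiv.toMultiplicative (ggTwist g n.toAdd)
  map_one' := by
    ext x <;> simp [ggTwist, AddEquiv.toMultiplicative]
  map_mul' n m := by
    ext x
    · simp [ggTwist, AddEquiv.toMultiplicative, add_mul]
      rw [Finset.sum_add_distrib]
      ring
    · simp [ggTwist, AddEquiv.toMultiplicative]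

namespace GGaux

variable {g : ℕ}

def sg : GGroup g := PresentedGroup.of .s
def ag (i : Fin g) : GGroup g := PresentedGroup.of (.a i)
def bg (i : Fin g) : GGroup g := PresentedGroup.of (.b i)

lemma rel_one {r : FreeGroup (GGGen g)} (hr : r ∈ GgRels g) :
    PresentedGroup.mk (GgRels g) r = 1 :=
  (QuotientGroup.eq_one_iff r).mpr (Subgroup.subset_normalClosure hr)

lemma comm_of (x y : GGGen g)
    (h : ∀ i : Fin g, ¬((x = .a i ∧ y = .b i) ∨ (x = .b i ∧ y = .a i))) :
    Commute (PresentedGroup.of (rels := GgRels g) x) (PresentedGroup.of y) := by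
  have h1 : PresentedGroup.of (rels := GgRels g) x * .of y * (PresentedGroup.of x)⁻¹ *
      (PresentedGroup.of y)⁻¹ = 1 := by
    have := rel_one (Or.inl ⟨x, y, h, rfl⟩ : _ ∈ GgRels g)
    simpa [PresentedGroup.of] using this
  exact commutatorElement_eq_one_iff_commute.mp h1

lemma comm_sa (i : Fin g) : Commute (sg (g := g)) (ag i) :=
  comm_of _ _ (by rintro k (⟨h1, h2⟩ | ⟨h1, h2⟩) <;> cases h1)

lemma comm_sb (i : Fin g) : Commute (sg (g := g)) (bg i) :=
  comm_of _ _ (by rintro k (⟨h1, h2⟩ | ⟨h1, h2⟩) <;> cases h1)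

lemma comm_aa (i j : Fin g) : Commute (ag (g := g) i) (ag j) :=
  comm_of _ _ (by rintro k (⟨h1, h2⟩ | ⟨h1, h2⟩) <;> cases h2 <;> cases h1)

lemma comm_bb (i j : Fin g) : Commute (bg (g := g) i) (bg j) :=
  comm_of _ _ (by rintro k (⟨h1, h2⟩ | ⟨h1, h2⟩) <;> cases h2 <;> cases h1)

lemma comm_ab {i j : Fin g} (hij : i ≠ j) : Commute (ag (g := g) i) (bg j) :=
  comm_of _ _ (by
    rintro k (⟨h1, h2⟩ | ⟨h1, h2⟩)
    · cases h1; cases h2; exact hij rfl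
    · cases h1)

lemma comm_s (x : GGroup g) : Commute (sg (g := g)) x := by
  have hx : x ∈ Subgroup.centralizer {sg (g := g)} := by
    refine PresentedGroup.generated_by _ (Subgroup.centralizer {sg (g := g)}) ?_ x
    intro j
    rw [Subgroup.mem_centralizer_iff]
    rintro h rfl
    cases j with
    | a i => exact (comm_sa i).eq
    | b i => exact (comm_sb i).eq
    | s => rfl
  rw [Subgroup.mem_centralizer_iff] at hx
  exact (hx sg rfl)

lemma rel2 (i : Fin g) :
    ag (g := g) i * bg i * (ag i)⁻¹ * (bg i)⁻¹ = sg ^ 2 := by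
  have := rel_one (Or.inr ⟨i, rfl⟩ : _ ∈ GgRels g)
  simp only [map_mul, map_inv, map_pow] at this
  have h2 := mul_eq_one_iff_eq_inv.mp this
  simpa [ag, bg, sg, PresentedGroup.of] using h2

end GGaux
namespace GGaux
variable {g : ℕ}

lemma conj_b_a (i : Fin g) : bg (g := g) i * ag i * (bg i)⁻¹ = (sg ^ 2)⁻¹ * ag i := by
  have h := rel2 (g := g) i
  have h2 : ag (g := g) i * bg i = sg ^ 2 * (bg i * ag i) := by
    rw [← h]; group
  have h3 : (sg (g := g) ^ 2)⁻¹ * (ag i * bg i) = bg i * ag i := by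
    rw [h2]; group
  rw [← h3]; group

lemma conj_b_apow (i : Fin g) (m : ℤ) :
    bg (g := g) i * ag i ^ m * (bg i)⁻¹ = sg ^ (-2 * m) * ag i ^ m := by
  have h1 : bg (g := g) i * ag i ^ m * (bg i)⁻¹ = (bg i * ag i * (bg i)⁻¹) ^ m := by
    rw [conj_zpow]
  rw [h1, conj_b_a]
  have hc : Commute ((sg (g := g) ^ 2)⁻¹) (ag i) := ((comm_s (ag i)).pow_left 2).inv_left
  rw [hc.mul_zpow]
  congr 1
  rw [← zpow_natCast (sg (g := g)) 2, ← zpow_neg, ← zpow_mul]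
  norm_num

lemma scent (c : ℤ) (y : GGroup g) : Commute (sg (g := g) ^ c) y :=
  (comm_s y).zpow_left c

lemma s_conj (c : ℤ) (x t : GGroup g) :
    x * (sg ^ c * t) * x⁻¹ = sg ^ c * (x * t * x⁻¹) := by
  have h := (scent (g := g) c x).eq
  calc x * (sg ^ c * t) * x⁻¹ = (x * sg ^ c) * t * x⁻¹ := by group
    _ = (sg ^ c * x) * t * x⁻¹ := by rw [← h]
    _ = sg ^ c * (x * t * x⁻¹) := by group

lemma conj_binv_apow (i : Fin g) (m : ℤ) :
    (bg (g := g) i)⁻¹ * ag i ^ m * bg i = sg ^ (2 * m) * ag i ^ m := by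
  have key : (bg (g := g) i)⁻¹ * (sg ^ (-2 * m) * ag i ^ m) * bg i = ag i ^ m := by
    rw [← conj_b_apow]; group
  have key2 : (bg (g := g) i)⁻¹ * (sg ^ (-2 * m) * ag i ^ m) * bg i =
      sg ^ (-2 * m) * ((bg i)⁻¹ * ag i ^ m * bg i) := by
    have h := s_conj (g := g) (-2 * m) ((bg i)⁻¹) (ag i ^ m)
    simpa using h
  rw [key2] at key
  have h3 : sg (g := g) ^ (2 * m) * (sg ^ (-2 * m) * ((bg i)⁻¹ * ag i ^ m * bg i)) =
      (bg i)⁻¹ * ag i ^ m * bg i := by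
    rw [← mul_assoc, ← zpow_add]; norm_num
  conv_lhs => rw [← h3]
  rw [key]

lemma conj_bpow_apow (i : Fin g) (n m : ℤ) :
    bg (g := g) i ^ n * ag i ^ m * (bg i ^ n)⁻¹ = sg ^ (-2 * n * m) * ag i ^ m := by
  induction n using Int.induction_on with
  | zero => simp
  | succ k ih =>
    have hsplit : bg (g := g) i ^ ((k : ℤ) + 1) = bg i * bg i ^ (k : ℤ) := by
      rw [← zpow_one_add]; ring_nf
    rw [hsplit, mul_inv_rev]
    calc bg (g := g) i * bg i ^ (k:ℤ) * ag i ^ m * ((bg i ^ (k:ℤ))⁻¹ * (bg i)⁻¹)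
        = bg i * (bg i ^ (k:ℤ) * ag i ^ m * (bg i ^ (k:ℤ))⁻¹) * (bg i)⁻¹ := by group
      _ = bg i * (sg ^ (-2 * k * m) * ag i ^ m) * (bg i)⁻¹ := by rw [ih]
      _ = sg ^ (-2 * k * m) * (bg i * ag i ^ m * (bg i)⁻¹) := by
          rw [s_conj]
      _ = sg ^ (-2 * k * m) * (sg ^ (-2 * m) * ag i ^ m) := by rw [conj_b_apow]
      _ = sg ^ (-2 * ((k:ℤ) + 1) * m) * ag i ^ m := by rw [← mul_assoc, ← zpow_add]; ring_nf
  | pred k ih =>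
    have hsplit : bg (g := g) i ^ (-(k : ℤ) - 1) = (bg i)⁻¹ * bg i ^ (-(k : ℤ)) := by
      rw [← zpow_neg_one, ← zpow_add]; ring_nf
    rw [hsplit, mul_inv_rev]
    calc (bg (g := g) i)⁻¹ * bg i ^ (-(k:ℤ)) * ag i ^ m * ((bg i ^ (-(k:ℤ)))⁻¹ * ((bg i)⁻¹)⁻¹)
        = (bg i)⁻¹ * (bg i ^ (-(k:ℤ)) * ag i ^ m * (bg i ^ (-(k:ℤ)))⁻¹) * ((bg i)⁻¹)⁻¹ := by group
      _ = (bg i)⁻¹ * (sg ^ (-2 * -(k:ℤ) * m) * ag i ^ m) * ((bg i)⁻¹)⁻¹ := by rw [ih]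
      _ = sg ^ (-2 * -(k:ℤ) * m) * ((bg i)⁻¹ * ag i ^ m * ((bg i)⁻¹)⁻¹) := by rw [s_conj]
      _ = sg ^ (-2 * -(k:ℤ) * m) * (sg ^ (2 * m) * ag i ^ m) := by rw [inv_inv, conj_binv_apow]
      _ = sg ^ (-2 * (-(k:ℤ) - 1) * m) * ag i ^ m := by rw [← mul_assoc, ← zpow_add]; ring_nf

end GGaux
namespace GGaux
variable {g : ℕ}

lemma commA (x y : Fin g) (mx my : ℤ) : Commute (ag (g := g) x ^ mx) (ag y ^ my) :=
  (comm_aa x y).zpow_zpow _ _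

lemma commB (x y : Fin g) (mx my : ℤ) : Commute (bg (g := g) x ^ mx) (bg y ^ my) :=
  (comm_bb x y).zpow_zpow _ _

def AhomPi : (Fin g → Multiplicative ℤ) →* GGroup g :=
  MonoidHom.noncommPiCoprod (fun i => zpowersHom _ (ag i))
    (fun i j _ x y => (comm_aa i j).zpow_zpow _ _)

def BhomPi : (Fin g → Multiplicative ℤ) →* GGroup g :=
  MonoidHom.noncommPiCoprod (fun i => zpowersHom _ (bg i))
    (fun i j _ x y => (comm_bb i j).zpow_zpow _ _)

def Aprod (m : Fin g → ℤ) : GGroup g := AhomPi (fun i => Multiplicative.ofAdd (m i))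

def Bprod (v : Fin g → ℤ) : GGroup g := BhomPi (fun i => Multiplicative.ofAdd (v i))

lemma Aprod_eq (m : Fin g → ℤ) :
    Aprod (g := g) m =
      Finset.univ.noncommProd (fun i => ag i ^ m i) (fun x _ y _ _ => commA x y _ _) := rfl

lemma Bprod_eq (v : Fin g → ℤ) :
    Bprod (g := g) v =
      Finset.univ.noncommProd (fun i => bg i ^ v i) (fun x _ y _ _ => commB x y _ _) := rfl

lemma Aprod_add (m m' : Fin g → ℤ) : Aprod (g := g) (m + m') = Aprod m * Aprod m' := by
  unfold Aprod
  rw [← map_mul]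
  rfl

lemma Bprod_add (v v' : Fin g → ℤ) : Bprod (g := g) (v + v') = Bprod v * Bprod v' := by
  unfold Bprod
  rw [← map_mul]
  rfl

lemma single_ofAdd (i : Fin g) (c : ℤ) :
    (fun j => Multiplicative.ofAdd ((Pi.single i c : Fin g → ℤ) j)) =
      Pi.mulSingle (M := fun _ : Fin g => Multiplicative ℤ) i (Multiplicative.ofAdd c) := by
  funext j
  by_cases h : j = i
  · subst h; simp
  · simp [Pi.single_eq_of_ne h, Pi.mulSingle_eq_of_ne h]

lemma Aprod_single (i : Fin g) (c : ℤ) : Aprod (g := g) (Pi.single i c) = ag i ^ c := by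
  unfold Aprod
  rw [single_ofAdd]
  unfold AhomPi
  erw [MonoidHom.noncommPiCoprod_mulSingle]
  rfl

lemma Bprod_single (i : Fin g) (c : ℤ) : Bprod (g := g) (Pi.single i c) = bg i ^ c := by
  unfold Bprod
  rw [single_ofAdd]
  unfold BhomPi
  erw [MonoidHom.noncommPiCoprod_mulSingle]
  rfl

lemma conjBS (s : Finset (Fin g)) (v : Fin g → ℤ) (i : Fin g) (m : ℤ) :
    s.noncommProd (fun j => bg (g := g) j ^ v j) (fun x _ y _ _ => commB x y _ _) *
        ag i ^ m *
        (s.noncommProd (fun j => bg j ^ v j) (fun x _ y _ _ => commB x y _ _))⁻¹ =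
      sg ^ (-2 * (if i ∈ s then v i else 0) * m) * ag i ^ m := by
  classical
  induction s using Finset.induction_on with
  | empty => erw [Finset.noncommProd_empty]; simp
  | insert _ _ ha ih =>
    rename_i a s
    erw [Finset.noncommProd_insert_of_notMem _ _ _ _ ha, mul_inv_rev]
    calc bg (g := g) a ^ v a * Finset.noncommProd s (fun j => bg j ^ v j) _ * ag i ^ m *
          ((Finset.noncommProd s (fun j => bg j ^ v j) _)⁻¹ * (bg a ^ v a)⁻¹)
        = bg a ^ v a * (Finset.noncommProd s (fun j => bg j ^ v j)
            (fun x _ y _ _ => commB x y _ _) * ag i ^ m *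
            (Finset.noncommProd s (fun j => bg j ^ v j)
              (fun x _ y _ _ => commB x y _ _))⁻¹) * (bg a ^ v a)⁻¹ := by group
      _ = bg a ^ v a * (sg ^ (-2 * (if i ∈ s then v i else 0) * m) * ag i ^ m) *
            (bg a ^ v a)⁻¹ := by rw [ih]
      _ = sg ^ (-2 * (if i ∈ s then v i else 0) * m) *
            (bg a ^ v a * ag i ^ m * (bg a ^ v a)⁻¹) := by rw [s_conj]
      _ = sg ^ (-2 * (if i ∈ insert a s then v i else 0) * m) * ag i ^ m := by
          by_cases hia : i = a
          · subst hia
            rw [conj_bpow_apow, ← mul_assoc, ← zpow_add,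
              if_neg ha, if_pos (Finset.mem_insert_self i s)]
            norm_num
          · have hcomm : Commute (bg (g := g) a ^ v a) (ag i ^ m) :=
              ((comm_ab hia).symm.zpow_zpow _ _)
            rw [hcomm.eq, mul_inv_cancel_right]
            simp [Finset.mem_insert, hia]

end GGaux
namespace GGaux
variable {g : ℕ}

lemma commSA (c m : Fin g → ℤ) (x y : Fin g) :
    Commute (sg (g := g) ^ c x * ag x ^ m x) (sg ^ c y * ag y ^ m y) :=
  Commute.mul_left (scent _ _)
    (Commute.mul_right ((scent (c y) (ag x ^ m x)).symm) (commA x y _ _))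

lemma pullout (s : Finset (Fin g)) (c m : Fin g → ℤ) :
    s.noncommProd (fun i => sg (g := g) ^ c i * ag i ^ m i)
        (fun x _ y _ _ => commSA c m x y) =
      sg ^ (∑ i ∈ s, c i) *
        s.noncommProd (fun i => ag i ^ m i) (fun x _ y _ _ => commA x y _ _) := by
  classical
  induction s using Finset.induction_on with
  | empty => erw [Finset.noncommProd_empty]; simp
  | insert _ _ ha ih =>
    rename_i a s
    erw [Finset.noncommProd_insert_of_notMem _ _ _ _ ha,
      Finset.noncommProd_insert_of_notMem _ _ _ _ ha, ih, Finset.sum_insert ha]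
    calc sg (g := g) ^ c a * ag a ^ m a *
          (sg ^ (∑ i ∈ s, c i) *
            s.noncommProd (fun i => ag i ^ m i) (fun x _ y _ _ => commA x y _ _))
        = sg ^ c a * (ag a ^ m a * sg ^ (∑ i ∈ s, c i)) *
            s.noncommProd (fun i => ag i ^ m i) (fun x _ y _ _ => commA x y _ _) := by group
      _ = sg ^ c a * (sg ^ (∑ i ∈ s, c i) * ag a ^ m a) *
            s.noncommProd (fun i => ag i ^ m i) (fun x _ y _ _ => commA x y _ _) := by
          rw [← (scent (∑ i ∈ s, c i) (ag (g := g) a ^ m a)).eq]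
      _ = sg ^ (c a + ∑ i ∈ s, c i) *
            (ag a ^ m a *
              s.noncommProd (fun i => ag i ^ m i) (fun x _ y _ _ => commA x y _ _)) := by
          rw [← mul_assoc, ← mul_assoc, ← zpow_add, mul_assoc]

set_option maxHeartbeats 1000000 in
lemma conj_B_A (v m : Fin g → ℤ) :
    Bprod (g := g) v * Aprod m * (Bprod v)⁻¹ = sg ^ (-2 * ∑ j, v j * m j) * Aprod m := by
  have h1 : Bprod (g := g) v * Aprod m * (Bprod v)⁻¹ =
      (MulAut.conj (Bprod (g := g) v)).toMonoidHom (Aprod m) := by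
    simp [MulAut.conj_apply]
  rw [h1, Aprod_eq]; erw [Finset.map_noncommProd]
  have h2 : ∀ x ∈ Finset.univ, (MulAut.conj (Bprod (g := g) v)).toMonoidHom (ag x ^ m x) =
      sg ^ (-2 * v x * m x) * ag x ^ m x := by
    intro x _
    have := conjBS Finset.univ v x (m x)
    simp only [if_pos (Finset.mem_univ x)] at this
    simpa [MulAut.conj_apply, Bprod_eq] using this
  rw [Finset.noncommProd_congr rfl h2
    (fun x _ y _ _ => (commA x y (m x) (m y)).map (MulAut.conj (Bprod (g := g) v)).toMonoidHom),
    pullout]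
  have he : (∑ i : Fin g, -2 * v i * m i) = -2 * ∑ j, v j * m j := by
    rw [Finset.mul_sum]
    exact Finset.sum_congr rfl (fun j _ => by ring)
  rw [he]

def AhomM : Multiplicative (Fin g → ℤ) →* GGroup g :=
  AhomPi.comp (MulEquiv.piMultiplicative (fun _ : Fin g => ℤ)).toMonoidHom

def f2hom : Multiplicative (Fin g → ℤ) →* GGroup g :=
  BhomPi.comp (MulEquiv.piMultiplicative (fun _ : Fin g => ℤ)).toMonoidHom

lemma f2hom_apply (v : Fin g → ℤ) : f2hom (g := g) (Multiplicative.ofAdd v) = Bprod v := rfl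

def f1hom : Multiplicative (ℤ × (Fin g → ℤ)) →* GGroup g where
  toFun u := sg ^ u.toAdd.1 * Aprod u.toAdd.2
  map_one' := by
    show sg (g := g) ^ (0 : ℤ) * Aprod 0 = 1
    rw [zpow_zero, one_mul]
    exact map_one AhomPi
  map_mul' u w := by
    show sg (g := g) ^ (u.toAdd.1 + w.toAdd.1) * Aprod (u.toAdd.2 + w.toAdd.2) = _
    rw [zpow_add, Aprod_add]
    calc sg (g := g) ^ u.toAdd.1 * sg ^ w.toAdd.1 * (Aprod u.toAdd.2 * Aprod w.toAdd.2)
        = sg ^ u.toAdd.1 * (sg ^ w.toAdd.1 * Aprod u.toAdd.2) * Aprod w.toAdd.2 := by group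
      _ = sg ^ u.toAdd.1 * (Aprod u.toAdd.2 * sg ^ w.toAdd.1) * Aprod w.toAdd.2 := by
          rw [show sg (g := g) ^ w.toAdd.1 * Aprod u.toAdd.2 =
            Aprod u.toAdd.2 * sg ^ w.toAdd.1 from (scent _ _).eq]
      _ = sg ^ u.toAdd.1 * Aprod u.toAdd.2 * (sg ^ w.toAdd.1 * Aprod w.toAdd.2) := by group

lemma f1hom_apply (p : ℤ) (m : Fin g → ℤ) :
    f1hom (g := g) (Multiplicative.ofAdd (p, m)) = sg ^ p * Aprod m := rfl

lemma ggTwistHom_apply (v : Fin g → ℤ) (p : ℤ) (m : Fin g → ℤ) :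
    (ggTwistHom g (Multiplicative.ofAdd v)) (Multiplicative.ofAdd (p, m)) =
      Multiplicative.ofAdd (p - 2 * ∑ j, v j * m j, m) := rfl

lemma hcond (v : Multiplicative (Fin g → ℤ)) :
    (f1hom (g := g)).comp ((ggTwistHom g v).toMonoidHom) =
      (MulAut.conj (f2hom v)).toMonoidHom.comp f1hom := by
  refine MonoidHom.ext fun u => ?_
  have hu : u = Multiplicative.ofAdd (u.toAdd.1, u.toAdd.2) := rfl
  have hv : v = Multiplicative.ofAdd v.toAdd := rfl
  rw [hu, hv]
  simp only [MonoidHom.comp_apply, MulEquiv.coe_toMonoidHom, MulAut.conj_apply,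
    ggTwistHom_apply, f1hom_apply, f2hom_apply]
  calc sg (g:=g) ^ (u.toAdd.1 - 2 * ∑ j, v.toAdd j * u.toAdd.2 j) * Aprod u.toAdd.2
      = sg ^ u.toAdd.1 * (sg ^ (-2 * ∑ j, v.toAdd j * u.toAdd.2 j) * Aprod u.toAdd.2) := by
        rw [← mul_assoc, ← zpow_add]
        ring_nf
    _ = sg ^ u.toAdd.1 * (Bprod v.toAdd * Aprod u.toAdd.2 * (Bprod v.toAdd)⁻¹) := by
        rw [conj_B_A]
    _ = Bprod v.toAdd * (sg ^ u.toAdd.1 * Aprod u.toAdd.2) * (Bprod v.toAdd)⁻¹ := by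
        rw [s_conj]

end GGaux
namespace GGaux
variable {g : ℕ}

abbrev SDPg (g : ℕ) :=
  Multiplicative (ℤ × (Fin g → ℤ)) ⋊[ggTwistHom g] Multiplicative (Fin g → ℤ)

def gens : GGGen g → SDPg g
  | .a i => SemidirectProduct.inl (Multiplicative.ofAdd (0, Pi.single i 1))
  | .b i => SemidirectProduct.inr (Multiplicative.ofAdd (Pi.single i 1))
  | .s => SemidirectProduct.inl (Multiplicative.ofAdd (1, 0))

lemma sdp_comm_inl_inr (u : Multiplicative (ℤ × (Fin g → ℤ)))
    (v : Multiplicative (Fin g → ℤ)) (h : (ggTwistHom g v) u = u) :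
    Commute (SemidirectProduct.inl (φ := ggTwistHom g) u) (SemidirectProduct.inr v) := by
  show _ = _
  ext <;> simp [h]

lemma sum_single_mul_single (i j : Fin g) :
    (∑ k, (Pi.single j 1 : Fin g → ℤ) k * (Pi.single i 1 : Fin g → ℤ) k) =
      if i = j then 1 else 0 := by
  simp [Pi.single_apply, Finset.sum_ite_eq]

lemma rels_hold : ∀ r ∈ GgRels g, FreeGroup.lift gens r = 1 := by
  rintro r (⟨x, y, hxy, rfl⟩ | ⟨i, rfl⟩)
  · have hc : Commute (gens x) (gens y) := by
      match x, y with
      | .a i, .a j => exact (Commute.all _ _).map _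
      | .a i, .s => exact (Commute.all _ _).map _
      | .s, .a j => exact (Commute.all _ _).map _
      | .s, .s => exact (Commute.all _ _).map _
      | .b i, .b j => exact (Commute.all _ _).map _
      | .a i, .b j =>
        have hij : i ≠ j := fun h => hxy j (Or.inl ⟨by rw [h], rfl⟩)
        refine (sdp_comm_inl_inr _ _ ?_).symm.symm
        rw [ggTwistHom_apply, sum_single_mul_single, if_neg hij]
        norm_num
      | .b i, .a j =>
        have hij : j ≠ i := fun h => hxy i (Or.inr ⟨rfl, by rw [h]⟩)
        refine (sdp_comm_inl_inr _ _ ?_).symm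
        rw [ggTwistHom_apply, sum_single_mul_single, if_neg hij]
        norm_num
      | .s, .b j =>
        refine sdp_comm_inl_inr _ _ ?_
        rw [ggTwistHom_apply]
        norm_num
      | .b i, .s =>
        refine (sdp_comm_inl_inr _ _ ?_).symm
        rw [ggTwistHom_apply]
        norm_num
    simp only [map_mul, map_inv, FreeGroup.lift_apply_of]
    exact commutatorElement_eq_one_iff_commute.mpr hc
  · simp only [map_mul, map_inv, map_pow, FreeGroup.lift_apply_of]
    rw [mul_inv_eq_one]
    show gens (.a i) * gens (.b i) * (gens (.a i))⁻¹ * (gens (.b i))⁻¹ = gens .s ^ 2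
    ext : 1
    · simp [gens, ggTwistHom_apply, Pi.single_apply]
      rw [← map_pow, SemidirectProduct.left_inl, ← ofAdd_neg, ← ofAdd_add, ← ofAdd_nsmul]
      congr 1
      ext <;> simp
    · simp [gens, ← map_pow]

end GGaux
namespace GGaux
variable {g : ℕ}

def fHom : GGroup g →* SDPg g := PresentedGroup.toGroup rels_hold

def gHom : SDPg g →* GGroup g := SemidirectProduct.lift f1hom f2hom hcond

lemma gHom_inl (u : Multiplicative (ℤ × (Fin g → ℤ))) :
    gHom (g := g) (SemidirectProduct.inl u) = f1hom u :=
  SemidirectProduct.lift_inl _ _ _ _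

lemma gHom_inr (v : Multiplicative (Fin g → ℤ)) :
    gHom (g := g) (SemidirectProduct.inr v) = f2hom v :=
  SemidirectProduct.lift_inr _ _ _ _

lemma fHom_s : fHom (sg (g := g)) = SemidirectProduct.inl (Multiplicative.ofAdd (1, 0)) :=
  PresentedGroup.toGroup.of rels_hold

lemma fHom_a (i : Fin g) :
    fHom (ag (g := g) i) = SemidirectProduct.inl (Multiplicative.ofAdd (0, Pi.single i 1)) :=
  PresentedGroup.toGroup.of rels_hold

lemma fHom_b (i : Fin g) :
    fHom (bg (g := g) i) = SemidirectProduct.inr (Multiplicative.ofAdd (Pi.single i 1)) :=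
  PresentedGroup.toGroup.of rels_hold

lemma zpow_ofAdd_single (x : Fin g) (c : ℤ) :
    (Multiplicative.ofAdd (((0 : ℤ), Pi.single x 1) : ℤ × (Fin g → ℤ))) ^ c =
      Multiplicative.ofAdd ((0 : ℤ), Pi.single x c) := by
  rw [← ofAdd_zsmul]
  have h : c • (((0 : ℤ), Pi.single x 1) : ℤ × (Fin g → ℤ)) = ((0 : ℤ), Pi.single x c) := by
    ext j
    · simp
    · simp [Pi.single_apply, smul_eq_mul]
  rw [h]

lemma fHom_Aprod (m : Fin g → ℤ) :
    fHom (Aprod (g := g) m) = SemidirectProduct.inl (Multiplicative.ofAdd (0, m)) := by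
  rw [Aprod_eq]; erw [Finset.map_noncommProd]
  have h2 : ∀ x ∈ Finset.univ, fHom (ag (g := g) x ^ m x) =
      SemidirectProduct.inl (φ := ggTwistHom g)
        (Multiplicative.ofAdd ((0 : ℤ), Pi.single x (m x))) := by
    intro x _
    rw [map_zpow, fHom_a, ← map_zpow, zpow_ofAdd_single]
  rw [Finset.noncommProd_congr rfl h2
    (fun x _ y _ _ => (commA x y (m x) (m y)).map fHom)]
  rw [← Finset.map_noncommProd Finset.univ
    (fun x => Multiplicative.ofAdd (((0 : ℤ), Pi.single x (m x)) : ℤ × (Fin g → ℤ)))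
    (fun x _ y _ _ => Commute.all _ _) (SemidirectProduct.inl (φ := ggTwistHom g))]
  congr 1
  rw [Finset.noncommProd_eq_prod, ← ofAdd_sum]
  congr 1
  have h : (∑ x, (((0 : ℤ), Pi.single x (m x)) : ℤ × (Fin g → ℤ))) = ((0 : ℤ), m) := by
    ext j
    · simp [Prod.fst_sum]
    · simp [Prod.snd_sum, Finset.sum_apply, Pi.single_apply]
  rw [h]

lemma fHom_Bprod (v : Fin g → ℤ) :
    fHom (Bprod (g := g) v) = SemidirectProduct.inr (Multiplicative.ofAdd v) := by
  rw [Bprod_eq]; erw [Finset.map_noncommProd]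
  have h2 : ∀ x ∈ Finset.univ, fHom (bg (g := g) x ^ v x) =
      SemidirectProduct.inr (φ := ggTwistHom g)
        (Multiplicative.ofAdd (Pi.single x (v x))) := by
    intro x _
    rw [map_zpow, fHom_b, ← map_zpow, ← ofAdd_zsmul]
    have h : v x • (Pi.single x 1 : Fin g → ℤ) = Pi.single x (v x) := by
      ext j
      simp [Pi.single_apply, smul_eq_mul]
    rw [h]
  rw [Finset.noncommProd_congr rfl h2
    (fun x _ y _ _ => (commB x y (v x) (v y)).map fHom)]
  rw [← Finset.map_noncommProd Finset.univ
    (fun x => Multiplicative.ofAdd (Pi.single x (v x) : Fin g → ℤ))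
    (fun x _ y _ _ => Commute.all _ _) (SemidirectProduct.inr (φ := ggTwistHom g))]
  congr 1
  rw [Finset.noncommProd_eq_prod, ← ofAdd_sum]
  congr 1
  ext j
  simp [Finset.sum_apply, Pi.single_apply]

lemma Aprod_zero : Aprod (g := g) 0 = 1 := map_one AhomPi

lemma comp1 : (gHom (g := g)).comp fHom = MonoidHom.id _ := by
  ext x
  rw [MonoidHom.comp_apply, MonoidHom.id_apply]
  show gHom (fHom (PresentedGroup.of x)) = PresentedGroup.of x
  rw [show fHom (PresentedGroup.of x) = gens x from PresentedGroup.toGroup.of rels_hold]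
  cases x with
  | s =>
    show gHom (SemidirectProduct.inl _) = _
    rw [gHom_inl, f1hom_apply, Aprod_zero, mul_one, zpow_one]
    rfl
  | a i =>
    show gHom (SemidirectProduct.inl _) = _
    rw [gHom_inl, f1hom_apply, Aprod_single, zpow_zero, one_mul, zpow_one]
    rfl
  | b i =>
    show gHom (SemidirectProduct.inr _) = _
    rw [gHom_inr, f2hom_apply, Bprod_single, zpow_one]
    rfl

lemma comp2 : (fHom (g := g)).comp gHom = MonoidHom.id _ := by
  apply SemidirectProduct.hom_ext
  · refine MonoidHom.ext fun u => ?_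
    simp only [MonoidHom.comp_apply, MonoidHom.id_apply]
    rw [gHom_inl]
    have hu : u = Multiplicative.ofAdd (u.toAdd.1, u.toAdd.2) := rfl
    rw [hu, f1hom_apply, map_mul, map_zpow, fHom_s, fHom_Aprod, ← map_zpow, ← map_mul]
    congr 1
    rw [← ofAdd_zsmul, ← ofAdd_add]
    congr 1
    ext j
    · show u.toAdd.1 • (1 : ℤ) + 0 = u.toAdd.1
      simp
    · show (u.toAdd.1 • ((0 : Fin g → ℤ))) j + u.toAdd.2 j = u.toAdd.2 j
      simp
  · refine MonoidHom.ext fun v => ?_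
    simp only [MonoidHom.comp_apply, MonoidHom.id_apply]
    rw [gHom_inr]
    have hv : v = Multiplicative.ofAdd v.toAdd := rfl
    rw [hv, f2hom_apply, fHom_Bprod]

end GGaux

/-- `G_g ≅ (ℤ × ℤ^g) ⋊ ℤ^g`. -/
theorem stmt8 (g : ℕ) (hg : 1 ≤ g) :
    ∃ φ : GGroup g ≃*
        (Multiplicative (ℤ × (Fin g → ℤ)) ⋊[ggTwistHom g] Multiplicative (Fin g → ℤ)),
      φ (PresentedGroup.of .s) = SemidirectProduct.inl (Multiplicative.ofAdd (1, 0)) ∧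
      (∀ i : Fin g, φ (PresentedGroup.of (.a i)) =
        SemidirectProduct.inl (Multiplicative.ofAdd (0, Pi.single i 1))) ∧
      (∀ i : Fin g, φ (PresentedGroup.of (.b i)) =
        SemidirectProduct.inr (Multiplicative.ofAdd (Pi.single i 1))) := by
  exact ⟨MonoidHom.toMulEquiv GGaux.fHom GGaux.gHom GGaux.comp1 GGaux.comp2,
    GGaux.fHom_s, fun i => GGaux.fHom_a i, fun i => GGaux.fHom_b i⟩
end

section
/- Let g ≥ 1. Every element of G_g can be written in a unique way in the form σ^p a_1^{m_1} ⋯ a_g^{m_g} b_1^{n_1} ⋯ b_g^{n_g}; that is, the map ℤ × ℤ^g × ℤ^g → G_g given by (p, (m_i), (n_i)) ↦ σ^p ∏_{i=1}^g a_i^{m_i} ∏_{i=1}^g b_i^{n_i} is a bijection. -/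
@[ext] structure Tw (g : ℕ) where
  p : ℤ
  m : Fin g → ℤ
  n : Fin g → ℤ

namespace Tw
variable {g : ℕ}

instance : Mul (Tw g) := ⟨fun x y => ⟨x.p + y.p + ∑ i, -2 * x.n i * y.m i, x.m + y.m, x.n + y.n⟩⟩
instance : One (Tw g) := ⟨⟨0, 0, 0⟩⟩
instance : Inv (Tw g) := ⟨fun x => ⟨-x.p + ∑ i, -2 * x.n i * x.m i, -x.m, -x.n⟩⟩

lemma mul_def (x y : Tw g) :
    x * y = ⟨x.p + y.p + ∑ i, -2 * x.n i * y.m i, x.m + y.m, x.n + y.n⟩ := rfl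
lemma one_def : (1 : Tw g) = ⟨0, 0, 0⟩ := rfl
lemma inv_def (x : Tw g) : x⁻¹ = ⟨-x.p + ∑ i, -2 * x.n i * x.m i, -x.m, -x.n⟩ := rfl

instance : Group (Tw g) where
  mul_assoc x y z := by
    ext <;> simp [mul_def, mul_add, add_mul, Finset.sum_add_distrib] <;> ring
  one_mul x := by ext <;> simp [mul_def, one_def]
  mul_one x := by ext <;> simp [mul_def, one_def]
  inv_mul_cancel x := by
    ext <;> simp [mul_def, one_def, inv_def, Finset.sum_add_distrib] <;> ring_nf

lemma commute_of (x y : Tw g) (h : ∑ i, x.n i * y.m i = ∑ i, y.n i * x.m i) :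
    Commute x y := by
  show x * y = y * x
  ext
  · show x.p + y.p + ∑ i, -2 * x.n i * y.m i = y.p + x.p + ∑ i, -2 * y.n i * x.m i
    have h2 : ∑ i, -2 * x.n i * y.m i = ∑ i, -2 * y.n i * x.m i := by
      rw [show (fun i => -2 * x.n i * y.m i) = fun i => -2 * (x.n i * y.m i) from by
        funext i; ring]
      rw [show (fun i => -2 * y.n i * x.m i) = fun i => -2 * (y.n i * x.m i) from by
        funext i; ring]
      rw [← Finset.mul_sum, ← Finset.mul_sum, h]
    rw [h2]; ring
  · simp [mul_def, add_comm]
  · simp [mul_def, add_comm]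

end Tw

namespace Stmt9

section Generic
variable {G : Type*} [Group G]

lemma zpow_twist {u v c : G} (hcu : Commute c u) (hcv : Commute c v)
    (h : u * v = c * (v * u)) (m n : ℤ) :
    u ^ m * v ^ n = c ^ (m * n) * (v ^ n * u ^ m) := by
  have h1 : SemiconjBy u v (c * v) := by
    unfold SemiconjBy; rw [h]; group
  have h2 : u * v ^ n = (c ^ n * v ^ n) * u := by
    have := h1.zpow_right n
    rwa [hcv.mul_zpow] at this
  have h4 : SemiconjBy (v ^ n) u ((c ^ n)⁻¹ * u) := by
    unfold SemiconjBy
    rw [mul_assoc, h2]; group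
  have h5 := h4.zpow_right m
  have h6 : ((c ^ n)⁻¹ * u) ^ m = ((c ^ n)⁻¹) ^ m * u ^ m :=
    Commute.mul_zpow ((hcu.zpow_left n).inv_left) m
  unfold SemiconjBy at h5
  rw [h6] at h5
  have he : c ^ (m * n) * (v ^ n * u ^ m) = c ^ (m * n) * ((c ^ n)⁻¹ ^ m * u ^ m * v ^ n) := by
    rw [h5]
  rw [he, ← zpow_neg, ← zpow_mul, ← mul_assoc, ← mul_assoc, ← zpow_add]
  rw [show m * n + -n * m = 0 from by ring, zpow_zero, one_mul]

lemma prod_map_zpow_mul {ι : Type*} (α : ι → G) (hα : ∀ i j, Commute (α i) (α j))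
    (m m' : ι → ℤ) (l : List ι) :
    (l.map fun i => α i ^ m i).prod * (l.map fun i => α i ^ m' i).prod
      = (l.map fun i => α i ^ (m i + m' i)).prod := by
  induction l with
  | nil => simp
  | cons i t ih =>
    have hc : Commute ((t.map fun j => α j ^ m j).prod) (α i ^ m' i) :=
      Commute.list_prod_left _ _ (by
        intro x hx
        obtain ⟨j, hj, rfl⟩ := List.mem_map.mp hx
        exact (hα j i).zpow_zpow _ _)
    simp only [List.map_cons, List.prod_cons]
    rw [mul_assoc, ← mul_assoc _ (α i ^ m' i), hc.eq, mul_assoc, ← mul_assoc,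
      ← zpow_add, ih]

lemma prod_map_eq_single {M : Type*} [Monoid M] {ι : Type*} (l : List ι)
    (hl : l.Nodup) {i : ι} (hi : i ∈ l) (f : ι → M) (hf : ∀ j, j ≠ i → f j = 1) :
    (l.map f).prod = f i := by
  induction l with
  | nil => cases hi
  | cons h t ih =>
    rcases List.mem_cons.mp hi with rfl | hit
    · simp only [List.map_cons, List.prod_cons]
      rw [List.prod_eq_one, mul_one]
      intro x hx
      obtain ⟨j, hj, rfl⟩ := List.mem_map.mp hx
      exact hf j (fun hji => (List.nodup_cons.mp hl).1 (hji ▸ hj))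
    · have hhi : h ≠ i := by rintro rfl; exact (List.nodup_cons.mp hl).1 hit
      simp only [List.map_cons, List.prod_cons, hf h hhi, one_mul]
      exact ih (List.nodup_cons.mp hl).2 hit

end Generic

variable {g : ℕ}

def A (i : Fin g) : GGroup g := PresentedGroup.of (.a i)
def B (i : Fin g) : GGroup g := PresentedGroup.of (.b i)
def S : GGroup g := PresentedGroup.of (.s)

lemma mk_rel {r : FreeGroup (GGGen g)} (hr : r ∈ GgRels g) :
    PresentedGroup.mk (GgRels g) r = 1 := by
  rw [PresentedGroup.mk_eq_one_iff]
  exact Subgroup.subset_normalClosure hr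

lemma comm_of {x y : GGGen g}
    (h : ∀ i : Fin g, ¬((x = .a i ∧ y = .b i) ∨ (x = .b i ∧ y = .a i))) :
    Commute (PresentedGroup.of x : GGroup g) (PresentedGroup.of y) := by
  rw [← commutatorElement_eq_one_iff_commute]
  have := mk_rel (g := g) (Or.inl ⟨x, y, h, rfl⟩)
  simpa [commutatorElement_def, PresentedGroup.of] using this

lemma comm_AA (i j : Fin g) : Commute (A i) (A j) :=
  comm_of (by rintro k (⟨h1, h2⟩ | ⟨h1, h2⟩) <;> simp_all)

lemma comm_BB (i j : Fin g) : Commute (B i) (B j) :=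
  comm_of (by rintro k (⟨h1, h2⟩ | ⟨h1, h2⟩) <;> simp_all)

lemma comm_SA (i : Fin g) : Commute S (A i) :=
  comm_of (by rintro k (⟨h1, h2⟩ | ⟨h1, h2⟩) <;> simp_all)

lemma comm_SB (i : Fin g) : Commute S (B i) :=
  comm_of (by rintro k (⟨h1, h2⟩ | ⟨h1, h2⟩) <;> simp_all)

lemma comm_AB {i j : Fin g} (hij : i ≠ j) : Commute (A i) (B j) :=
  comm_of (by rintro k (⟨h1, h2⟩ | ⟨h1, h2⟩) <;> simp_all)

lemma rel_AB (i : Fin g) : A i * B i = S ^ 2 * (B i * A i) := by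
  have h2 : A i * B i * (A i)⁻¹ * (B i)⁻¹ * ((S : GGroup g) ^ 2)⁻¹ = 1 :=
    mk_rel (g := g) (Or.inr ⟨i, rfl⟩)
  rw [mul_inv_eq_one] at h2
  rw [← h2]
  group

/-- `σ` is central. -/
lemma S_central (x : GGroup g) : Commute S x := by
  have : x ∈ Subgroup.centralizer {(S : GGroup g)} := by
    apply PresentedGroup.generated_by
    intro j
    rw [Subgroup.mem_centralizer_iff]
    rintro y ⟨rfl⟩
    cases j with
    | a i => exact (comm_SA i).eq
    | b i => exact (comm_SB i).eq
    | s => rfl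
  exact Subgroup.mem_centralizer_iff.mp this S rfl

lemma S_shift (x : GGroup g) (t : ℤ) (y : GGroup g) :
    x * (S ^ t * y) = S ^ t * (x * y) := by
  rw [← mul_assoc, ← ((S_central x).zpow_left t).eq, mul_assoc]

lemma twist_BA (i : Fin g) (n k : ℤ) :
    B i ^ n * A i ^ k = S ^ (-2 * n * k) * (A i ^ k * B i ^ n) := by
  have hc : (B i) * (A i) = ((S : GGroup g) ^ (2 : ℕ))⁻¹ * (A i * B i) := by
    rw [rel_AB]; group
  have hcu : Commute (((S : GGroup g) ^ (2 : ℕ))⁻¹) (B i) :=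
    ((comm_SB i).pow_left 2).inv_left
  have hcv : Commute (((S : GGroup g) ^ (2 : ℕ))⁻¹) (A i) :=
    ((comm_SA i).pow_left 2).inv_left
  have h := zpow_twist hcu hcv hc n k
  rw [h]
  congr 1
  group

def PA (m : Fin g → ℤ) : GGroup g := (List.ofFn fun i => A i ^ m i).prod
def PB (n : Fin g → ℤ) : GGroup g := (List.ofFn fun i => B i ^ n i).prod

lemma B_zpow_mul_prodA (i : Fin g) (n : ℤ) (m : Fin g → ℤ) (l : List (Fin g)) :
    B i ^ n * (l.map fun j => A j ^ m j).prod
      = S ^ ((l.map fun j => if j = i then -2 * n * m j else 0).sum)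
        * ((l.map fun j => A j ^ m j).prod * B i ^ n) := by
  induction l with
  | nil => simp
  | cons j t ih =>
    simp only [List.map_cons, List.prod_cons, List.sum_cons]
    set P := (t.map fun k => A k ^ m k).prod with hP
    set T := (t.map fun k => if k = i then -2 * n * m k else 0).sum with hT
    by_cases hj : j = i
    · subst hj
      rw [if_pos rfl]
      calc B j ^ n * (A j ^ m j * P)
          = (B j ^ n * A j ^ m j) * P := (mul_assoc _ _ _).symm
        _ = (S ^ (-2 * n * m j) * (A j ^ m j * B j ^ n)) * P := by rw [twist_BA]
        _ = S ^ (-2 * n * m j) * (A j ^ m j * (B j ^ n * P)) := by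
            simp only [mul_assoc]
        _ = S ^ (-2 * n * m j) * (A j ^ m j * (S ^ T * (P * B j ^ n))) := by rw [ih]
        _ = S ^ (-2 * n * m j) * (S ^ T * (A j ^ m j * (P * B j ^ n))) := by
            rw [S_shift]
        _ = S ^ (-2 * n * m j + T) * (A j ^ m j * P * B j ^ n) := by
            rw [← mul_assoc, ← zpow_add]; simp only [mul_assoc]
    · rw [if_neg hj, zero_add]
      have hcomm : Commute (B i ^ n) (A j ^ m j) :=
        ((comm_AB hj).symm.zpow_zpow n (m j))
      calc B i ^ n * (A j ^ m j * P)
          = (B i ^ n * A j ^ m j) * P := (mul_assoc _ _ _).symm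
        _ = (A j ^ m j * B i ^ n) * P := by rw [hcomm.eq]
        _ = A j ^ m j * (B i ^ n * P) := mul_assoc _ _ _
        _ = A j ^ m j * (S ^ T * (P * B i ^ n)) := by rw [ih]
        _ = S ^ T * (A j ^ m j * P * B i ^ n) := by rw [S_shift]; simp only [mul_assoc]

lemma ofFn_eq (f : Fin g → GGroup g) : List.ofFn f = (List.finRange g).map f :=
  List.ofFn_eq_map

lemma B_zpow_mul_PA (i : Fin g) (n : ℤ) (mf : Fin g → ℤ) :
    B i ^ n * PA mf = S ^ (-2 * n * mf i) * (PA mf * B i ^ n) := by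
  have h := B_zpow_mul_prodA i n mf (List.finRange g)
  rw [PA, ofFn_eq]
  rw [h]
  congr 2
  rw [← Fin.sum_univ_def]
  simp

lemma prodB_mul_PA (nf mf : Fin g → ℤ) (l : List (Fin g)) :
    (l.map fun i => B i ^ nf i).prod * PA mf
      = S ^ ((l.map fun i => -2 * nf i * mf i).sum)
        * (PA mf * (l.map fun i => B i ^ nf i).prod) := by
  induction l with
  | nil => simp
  | cons i t ih =>
    simp only [List.map_cons, List.prod_cons, List.sum_cons]
    set Q := (t.map fun k => B k ^ nf k).prod with hQ
    set T := (t.map fun k => -2 * nf k * mf k).sum with hT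
    calc B i ^ nf i * Q * PA mf
        = B i ^ nf i * (Q * PA mf) := mul_assoc _ _ _
      _ = B i ^ nf i * (S ^ T * (PA mf * Q)) := by rw [ih]
      _ = S ^ T * (B i ^ nf i * (PA mf * Q)) := by rw [S_shift]
      _ = S ^ T * ((B i ^ nf i * PA mf) * Q) := by simp only [mul_assoc]
      _ = S ^ T * ((S ^ (-2 * nf i * mf i) * (PA mf * B i ^ nf i)) * Q) := by
          rw [B_zpow_mul_PA]
      _ = S ^ (-2 * nf i * mf i + T) * (PA mf * (B i ^ nf i * Q)) := by
          rw [mul_assoc, S_shift, ← mul_assoc, ← zpow_add]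
          simp only [mul_assoc]

lemma PB_mul_PA (nf mf : Fin g → ℤ) :
    PB nf * PA mf = S ^ (∑ i, -2 * nf i * mf i) * (PA mf * PB nf) := by
  rw [PB, ofFn_eq, prodB_mul_PA, Fin.sum_univ_def]

lemma PA_mul (m m' : Fin g → ℤ) : PA m * PA m' = PA (m + m') := by
  rw [PA, PA, PA, ofFn_eq, ofFn_eq, ofFn_eq, prod_map_zpow_mul A comm_AA]
  rfl

lemma PB_mul (n n' : Fin g → ℤ) : PB n * PB n' = PB (n + n') := by
  rw [PB, PB, PB, ofFn_eq, ofFn_eq, ofFn_eq, prod_map_zpow_mul B comm_BB]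
  rfl

lemma PA_single (i : Fin g) (c : ℤ) : PA (Pi.single i c) = A i ^ c := by
  rw [PA, ofFn_eq]
  rw [prod_map_eq_single (List.finRange g) (List.nodup_finRange g) (List.mem_finRange i)]
  · simp
  · intro j hj
    simp [Pi.single_apply, if_neg hj]

lemma PB_single (i : Fin g) (c : ℤ) : PB (Pi.single i c) = B i ^ c := by
  rw [PB, ofFn_eq]
  rw [prod_map_eq_single (List.finRange g) (List.nodup_finRange g) (List.mem_finRange i)]
  · simp
  · intro j hj
    simp [Pi.single_apply, if_neg hj]

lemma PA_zero : PA (0 : Fin g → ℤ) = 1 := by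
  rw [PA]; simp

lemma PB_zero : PB (0 : Fin g → ℤ) = 1 := by
  rw [PB]; simp

def Fhat : Tw g →* GGroup g where
  toFun x := S ^ x.p * PA x.m * PB x.n
  map_one' := by
    show S ^ (0 : ℤ) * PA 0 * PB 0 = 1
    simp [PA_zero, PB_zero]
  map_mul' x y := by
    show S ^ (x.p + y.p + ∑ i, -2 * x.n i * y.m i) * PA (x.m + y.m) * PB (x.n + y.n)
        = S ^ x.p * PA x.m * PB x.n * (S ^ y.p * PA y.m * PB y.n)
    have key : S ^ x.p * PA x.m * PB x.n * (S ^ y.p * PA y.m * PB y.n)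
        = S ^ (x.p + y.p + ∑ i, -2 * x.n i * y.m i) * (PA (x.m + y.m) * PB (x.n + y.n)) := by
      calc S ^ x.p * PA x.m * PB x.n * (S ^ y.p * PA y.m * PB y.n)
          = S ^ x.p * (PA x.m * (PB x.n * (S ^ y.p * (PA y.m * PB y.n)))) := by
            simp only [mul_assoc]
        _ = S ^ x.p * (PA x.m * (S ^ y.p * (PB x.n * (PA y.m * PB y.n)))) := by
            rw [S_shift (PB x.n)]
        _ = S ^ x.p * (S ^ y.p * (PA x.m * (PB x.n * (PA y.m * PB y.n)))) := by
            rw [S_shift (PA x.m)]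
        _ = S ^ x.p * (S ^ y.p * (PA x.m * ((PB x.n * PA y.m) * PB y.n))) := by
            simp only [mul_assoc]
        _ = S ^ x.p * (S ^ y.p * (PA x.m *
              ((S ^ (∑ i, -2 * x.n i * y.m i) * (PA y.m * PB x.n)) * PB y.n))) := by
            rw [PB_mul_PA]
        _ = S ^ x.p * (S ^ y.p * (S ^ (∑ i, -2 * x.n i * y.m i) *
              (PA x.m * (PA y.m * (PB x.n * PB y.n))))) := by
            simp only [mul_assoc]; rw [S_shift (PA x.m)]
        _ = S ^ (x.p + y.p + ∑ i, -2 * x.n i * y.m i) *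
              (PA x.m * PA y.m * (PB x.n * PB y.n)) := by
            rw [← mul_assoc (S ^ x.p), ← zpow_add, ← mul_assoc (S ^ (x.p + y.p)), ← zpow_add]
            simp only [mul_assoc]
        _ = S ^ (x.p + y.p + ∑ i, -2 * x.n i * y.m i) *
              (PA (x.m + y.m) * PB (x.n + y.n)) := by
            rw [PA_mul, PB_mul]
    rw [key, ← mul_assoc]

def fgen : GGGen g → Tw g
  | .a i => ⟨0, Pi.single i 1, 0⟩
  | .b i => ⟨0, 0, Pi.single i 1⟩
  | .s => ⟨1, 0, 0⟩

lemma single_dot (i j : Fin g) (c d : ℤ) :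
    ∑ k, Pi.single i c k * Pi.single j d k = if i = j then c * d else 0 := by
  simp only [Pi.single_apply, ite_mul, mul_ite, zero_mul, mul_zero, one_mul, mul_one]
  rcases eq_or_ne i j with rfl | h
  · simp
  · simp [h, fun k => show ¬(k = i ∧ k = j) from fun ⟨h1, h2⟩ => h (h1 ▸ h2 ▸ rfl)]
    exact fun hji => absurd hji (Ne.symm h)

open scoped commutatorElement in
lemma hrels : ∀ r ∈ GgRels g, FreeGroup.lift fgen r = 1 := by
  rintro r (⟨x, y, hxy, rfl⟩ | ⟨i, rfl⟩)
  · simp only [map_mul, map_inv, FreeGroup.lift_apply_of]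
    rw [show fgen x * fgen y * (fgen x)⁻¹ * (fgen y)⁻¹ = ⁅fgen x, fgen y⁆ from rfl,
      commutatorElement_eq_one_iff_commute]
    cases x with
    | a i =>
      cases y with
      | a j => exact Tw.commute_of _ _ (by simp [fgen])
      | b j =>
        have hij : ¬ j = i := by
          have h := hxy i
          simp at h
          exact h
        exact Tw.commute_of _ _ (by simp [fgen, single_dot, hij])
      | s => exact Tw.commute_of _ _ (by simp [fgen])
    | b i =>
      cases y with
      | a j =>
        have hij : ¬ i = j := by
          have h := hxy j
          simp at h
          exact h
        exact Tw.commute_of _ _ (by simp [fgen, single_dot, hij])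
      | b j => exact Tw.commute_of _ _ (by simp [fgen])
      | s => exact Tw.commute_of _ _ (by simp [fgen])
    | s => exact Tw.commute_of _ _ (by simp [fgen])
  · simp only [map_mul, map_inv, map_pow, FreeGroup.lift_apply_of]
    have hsum : ∑ x : Fin g, (Pi.single i 1 : Fin g → ℤ) x ^ 2 * 2 = 2 := by
      have h1 : ∀ x : Fin g, (Pi.single i 1 : Fin g → ℤ) x ^ 2 * 2
          = if x = i then 2 else 0 := by
        intro x
        by_cases h : x = i
        · subst h; simp
        · simp [Pi.single_apply, h]
      rw [Finset.sum_congr rfl fun x _ => h1 x]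
      simp
    ext <;>
      simp [fgen, Tw.mul_def, Tw.inv_def, Tw.one_def, pow_succ, pow_zero, single_dot] <;>
      try ring
    all_goals linarith [hsum]

def phi : GGroup g →* Tw g := PresentedGroup.toGroup hrels

lemma zpow_s (k : ℤ) : (⟨1, 0, 0⟩ : Tw g) ^ k = ⟨k, 0, 0⟩ := by
  induction k using Int.induction_on with
  | zero => rw [zpow_zero]; rfl
  | succ k ih => rw [zpow_add_one, ih]; ext <;> simp [Tw.mul_def]
  | pred k ih =>
    rw [zpow_sub_one, ih]; ext <;> simp [Tw.mul_def, Tw.inv_def, sub_eq_add_neg]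

lemma zpow_a (i : Fin g) (k : ℤ) :
    (⟨0, Pi.single i 1, 0⟩ : Tw g) ^ k = ⟨0, Pi.single i k, 0⟩ := by
  induction k using Int.induction_on with
  | zero => rw [zpow_zero]; ext <;> simp [Tw.one_def]
  | succ k ih => rw [zpow_add_one, ih]; ext <;> simp [Tw.mul_def, Pi.single_add]
  | pred k ih =>
    rw [zpow_sub_one, ih]; ext <;>
      simp [Tw.mul_def, Tw.inv_def, Pi.single_add, sub_eq_add_neg, ← Pi.single_neg]

lemma zpow_b (i : Fin g) (k : ℤ) :
    (⟨0, 0, Pi.single i 1⟩ : Tw g) ^ k = ⟨0, 0, Pi.single i k⟩ := by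
  induction k using Int.induction_on with
  | zero => rw [zpow_zero]; ext <;> simp [Tw.one_def]
  | succ k ih => rw [zpow_add_one, ih]; ext <;> simp [Tw.mul_def, Pi.single_add]
  | pred k ih =>
    rw [zpow_sub_one, ih]; ext <;>
      simp [Tw.mul_def, Tw.inv_def, Pi.single_add, sub_eq_add_neg, ← Pi.single_neg]

lemma prod_tw_a (mf : Fin g → ℤ) (l : List (Fin g)) :
    (l.map fun i => (⟨0, Pi.single i (mf i), 0⟩ : Tw g)).prod
      = ⟨0, (l.map fun i => (Pi.single i (mf i) : Fin g → ℤ)).sum, 0⟩ := by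
  induction l with
  | nil => rfl
  | cons i t ih => simp only [List.map_cons, List.prod_cons, List.sum_cons, ih]
                   ext <;> simp [Tw.mul_def]

lemma prod_tw_b (nf : Fin g → ℤ) (l : List (Fin g)) :
    (l.map fun i => (⟨0, 0, Pi.single i (nf i)⟩ : Tw g)).prod
      = ⟨0, 0, (l.map fun i => (Pi.single i (nf i) : Fin g → ℤ)).sum⟩ := by
  induction l with
  | nil => rfl
  | cons i t ih => simp only [List.map_cons, List.prod_cons, List.sum_cons, ih]
                   ext <;> simp [Tw.mul_def]

lemma sum_single (mf : Fin g → ℤ) :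
    ((List.finRange g).map fun i => (Pi.single i (mf i) : Fin g → ℤ)).sum = mf := by
  rw [← Fin.sum_univ_def]
  exact Finset.univ_sum_single mf

lemma phi_gen_a (i : Fin g) : phi (A i) = ⟨0, Pi.single i 1, 0⟩ :=
  PresentedGroup.toGroup.of hrels

lemma phi_gen_b (i : Fin g) : phi (B i) = ⟨0, 0, Pi.single i 1⟩ :=
  PresentedGroup.toGroup.of hrels

lemma phi_gen_s : phi (S : GGroup g) = ⟨1, 0, 0⟩ :=
  PresentedGroup.toGroup.of hrels

lemma phi_PA (mf : Fin g → ℤ) : phi (PA mf) = ⟨0, mf, 0⟩ := by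
  rw [PA, ofFn_eq, map_list_prod, List.map_map]
  have h : ((phi : GGroup g →* Tw g) ∘ fun i => A i ^ mf i)
      = fun i => (⟨0, Pi.single i (mf i), 0⟩ : Tw g) := by
    funext i
    simp [Function.comp, map_zpow, phi_gen_a, zpow_a]
  rw [h, prod_tw_a, sum_single]

lemma phi_PB (nf : Fin g → ℤ) : phi (PB nf) = ⟨0, 0, nf⟩ := by
  rw [PB, ofFn_eq, map_list_prod, List.map_map]
  have h : ((phi : GGroup g →* Tw g) ∘ fun i => B i ^ nf i)
      = fun i => (⟨0, 0, Pi.single i (nf i)⟩ : Tw g) := by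
    funext i
    simp [Function.comp, map_zpow, phi_gen_b, zpow_b]
  rw [h, prod_tw_b, sum_single]

lemma phi_normal (p : ℤ) (mf nf : Fin g → ℤ) :
    phi (S ^ p * PA mf * PB nf) = ⟨p, mf, nf⟩ := by
  rw [map_mul, map_mul, map_zpow, phi_gen_s, phi_PA, phi_PB, zpow_s]
  ext <;> simp [Tw.mul_def]

lemma Fhat_apply (x : Tw g) : Fhat x = S ^ x.p * PA x.m * PB x.n := rfl

lemma Fhat_phi : (Fhat.comp (phi : GGroup g →* Tw g)) = MonoidHom.id (GGroup g) := by
  apply PresentedGroup.ext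
  intro z
  cases z with
  | a i =>
    show Fhat (phi (A i)) = A i
    rw [phi_gen_a]
    show S ^ (0 : ℤ) * PA (Pi.single i 1) * PB 0 = A i
    rw [zpow_zero, one_mul, PA_single, PB_zero, mul_one, zpow_one]
  | b i =>
    show Fhat (phi (B i)) = B i
    rw [phi_gen_b]
    show S ^ (0 : ℤ) * PA 0 * PB (Pi.single i 1) = B i
    rw [zpow_zero, one_mul, PA_zero, one_mul, PB_single, zpow_one]
  | s =>
    show Fhat (phi (S : GGroup g)) = S
    rw [phi_gen_s, Fhat_apply]
    show S ^ (1 : ℤ) * PA 0 * PB 0 = S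
    rw [zpow_one, PA_zero, PB_zero, mul_one, mul_one]

end Stmt9

open Stmt9

/-- Unique normal form `σ^p a_1^{m_1} ⋯ a_g^{m_g} b_1^{n_1} ⋯ b_g^{n_g}`
for elements of `G_g`. -/
theorem stmt9 (g : ℕ) (hg : 1 ≤ g) :
    Function.Bijective (fun x : ℤ × (Fin g → ℤ) × (Fin g → ℤ) =>
      ((PresentedGroup.of .s : GGroup g) ^ x.1 *
        (List.ofFn fun i : Fin g => (PresentedGroup.of (.a i) : GGroup g) ^ x.2.1 i).prod *
        (List.ofFn fun i : Fin g => (PresentedGroup.of (.b i) : GGroup g) ^ x.2.2 i).prod)) := by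
  constructor
  · intro x y hxy
    have h2 : phi ((S : GGroup g) ^ x.1 * PA x.2.1 * PB x.2.2)
        = phi ((S : GGroup g) ^ y.1 * PA y.2.1 * PB y.2.2) := congrArg phi hxy
    rw [phi_normal, phi_normal] at h2
    have hp : x.1 = y.1 := congrArg Tw.p h2
    have hm : x.2.1 = y.2.1 := congrArg Tw.m h2
    have hn : x.2.2 = y.2.2 := congrArg Tw.n h2
    exact Prod.ext hp (Prod.ext hm hn)
  · intro yg
    refine ⟨⟨(phi yg).p, (phi yg).m, (phi yg).n⟩, ?_⟩
    show (S : GGroup g) ^ (phi yg).p * PA (phi yg).m * PB (phi yg).n = yg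
    have h3 : Fhat (phi yg) = yg := by
      calc Fhat (phi yg) = (Fhat.comp (phi : GGroup g →* Tw g)) yg := rfl
        _ = MonoidHom.id (GGroup g) yg := by rw [Fhat_phi]
        _ = yg := rfl
    exact h3
end

section
/- Let g ≥ 1 and let H be a group. Any group homomorphism φ : G_g → H such that φ(σ) has infinite order is injective. -/
namespace GgAux

/-- If `a * b = b * a * s` with `s` commuting with `a`, then
`a ^ k * b = b * a ^ k * s ^ k` for all integers `k`. -/
lemma key {G : Type*} [Group G] {a b s : G} (hsa : Commute s a) (h : a * b = b * a * s)
    (k : ℤ) : a ^ k * b = b * a ^ k * s ^ k := by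
  have h1 : b⁻¹ * a * b = a * s := by
    rw [mul_assoc, h, ← mul_assoc, ← mul_assoc, inv_mul_cancel, one_mul]
  have h2 : b⁻¹ * a ^ k * b = a ^ k * s ^ k := by
    calc b⁻¹ * a ^ k * b = (b⁻¹ * a * b⁻¹⁻¹) ^ k := by rw [conj_zpow, inv_inv]
      _ = (a * s) ^ k := by rw [inv_inv, h1]
      _ = a ^ k * s ^ k := (hsa.symm.mul_zpow k)
  calc a ^ k * b = b * (b⁻¹ * a ^ k * b) := by
        rw [← mul_assoc, ← mul_assoc, mul_inv_cancel, one_mul]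
    _ = b * (a ^ k * s ^ k) := by rw [h2]
    _ = b * a ^ k * s ^ k := by rw [mul_assoc]

lemma swap_side {G : Type*} [Group G] {x c s : G} (h : x * c = c * x * s) :
    c * x = x * c * s⁻¹ := by rw [h, mul_inv_cancel_right]

/-- distributing exponent sums over a list product of pairwise commuting elements -/
lemma list_zpow_add {G ι : Type*} [Group G] (f : ι → G)
    (hf : ∀ i j, Commute (f i) (f j)) (p p' : ι → ℤ) :
    ∀ l : List ι, (l.map fun i => f i ^ (p i + p' i)).prod
      = (l.map fun i => f i ^ p i).prod * (l.map fun i => f i ^ p' i).prod := by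
  intro l
  induction l with
  | nil => simp
  | cons j l ih =>
    have hc : Commute (f j ^ p' j) ((l.map fun i => f i ^ p i).prod) := by
      apply Commute.list_prod_right
      intro x hx
      obtain ⟨i, _, rfl⟩ := List.mem_map.mp hx
      exact (hf j i).zpow_zpow _ _
    simp only [List.map_cons, List.prod_cons]
    rw [ih, zpow_add]
    calc f j ^ p j * f j ^ p' j * ((l.map fun i => f i ^ p i).prod
            * (l.map fun i => f i ^ p' i).prod)
        = f j ^ p j * ((f j ^ p' j * (l.map fun i => f i ^ p i).prod)
            * (l.map fun i => f i ^ p' i).prod) := by simp only [mul_assoc]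
      _ = f j ^ p j * (((l.map fun i => f i ^ p i).prod * f j ^ p' j)
            * (l.map fun i => f i ^ p' i).prod) := by rw [hc.eq]
      _ = f j ^ p j * (l.map fun i => f i ^ p i).prod
            * (f j ^ p' j * (l.map fun i => f i ^ p' i).prod) := by simp only [mul_assoc]

/-- moving an element through a list product, picking up central factors -/
lemma list_move {G ι : Type*} [Group G] (S c : G) (f : ι → G) (p t : ι → ℤ)
    (hSf : ∀ i (k : ℤ), Commute (S ^ k) (f i ^ p i))
    (h : ∀ j, c * f j ^ p j = f j ^ p j * c * S ^ (t j * p j)) :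
    ∀ l : List ι, c * (l.map fun i => f i ^ p i).prod
      = (l.map fun i => f i ^ p i).prod * c * S ^ ((l.map fun i => t i * p i).sum) := by
  intro l
  induction l with
  | nil => simp
  | cons j l ih =>
    have hS : ∀ (k : ℤ), Commute (S ^ k) ((l.map fun i => f i ^ p i).prod) := by
      intro k
      apply Commute.list_prod_right
      intro x hx
      obtain ⟨i, _, rfl⟩ := List.mem_map.mp hx
      exact hSf i k
    simp only [List.map_cons, List.prod_cons, List.sum_cons]
    calc c * (f j ^ p j * (l.map fun i => f i ^ p i).prod)
        = (c * f j ^ p j) * (l.map fun i => f i ^ p i).prod := by rw [mul_assoc]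
      _ = f j ^ p j * c * (S ^ (t j * p j) * (l.map fun i => f i ^ p i).prod) := by
          rw [h j]; simp only [mul_assoc]
      _ = f j ^ p j * (c * (l.map fun i => f i ^ p i).prod) * S ^ (t j * p j) := by
          rw [(hS (t j * p j)).eq]; simp only [mul_assoc]
      _ = f j ^ p j * ((l.map fun i => f i ^ p i).prod * c * S ^ ((l.map fun i => t i * p i).sum))
            * S ^ (t j * p j) := by rw [ih]
      _ = f j ^ p j * (l.map fun i => f i ^ p i).prod * c
            * S ^ (t j * p j + (l.map fun i => t i * p i).sum) := by
          rw [zpow_add]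
          calc f j ^ p j * ((l.map fun i => f i ^ p i).prod * c
                  * S ^ ((l.map fun i => t i * p i).sum)) * S ^ (t j * p j)
              = f j ^ p j * (l.map fun i => f i ^ p i).prod * c
                  * (S ^ ((l.map fun i => t i * p i).sum) * S ^ (t j * p j)) := by
                simp only [mul_assoc]
            _ = f j ^ p j * (l.map fun i => f i ^ p i).prod * c
                  * (S ^ (t j * p j) * S ^ ((l.map fun i => t i * p i).sum)) := by
                rw [← zpow_add, ← zpow_add, add_comm]

variable {g : ℕ}

def A (i : Fin g) : GGroup g := PresentedGroup.of (.a i)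
def B (i : Fin g) : GGroup g := PresentedGroup.of (.b i)
def S : GGroup g := (PresentedGroup.of GGGen.s : GGroup g)

lemma rel_one {r : FreeGroup (GGGen g)} (h : r ∈ GgRels g) :
    PresentedGroup.mk (GgRels g) r = 1 := by
  have : r ∈ Subgroup.normalClosure (GgRels g) := Subgroup.subset_normalClosure h
  exact (QuotientGroup.eq_one_iff r).mpr this

lemma commute_of {x y : GGGen g}
    (hxy : ∀ i : Fin g, ¬((x = .a i ∧ y = .b i) ∨ (x = .b i ∧ y = .a i))) :
    Commute (PresentedGroup.of x : GGroup g) (PresentedGroup.of y) := by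
  have h := rel_one (g := g) (Or.inl ⟨x, y, hxy, rfl⟩)
  simp only [map_mul, map_inv] at h
  have h2 : (PresentedGroup.of x : GGroup g) * PresentedGroup.of y *
      (PresentedGroup.of x)⁻¹ * (PresentedGroup.of y)⁻¹ = 1 := h
  rw [mul_inv_eq_one, mul_inv_eq_iff_eq_mul] at h2
  exact h2

lemma commute_AA (i j : Fin g) : Commute (A i) (A j) := commute_of (by simp)
lemma commute_BB (i j : Fin g) : Commute (B i) (B j) := commute_of (by simp)
lemma commute_AB {i j : Fin g} (h : i ≠ j) : Commute (A i) (B j) :=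
  commute_of (by simp [h, h.symm])
lemma commute_SA (i : Fin g) : Commute (S : GGroup g) (A i) := commute_of (by simp)
lemma commute_SB (i : Fin g) : Commute (S : GGroup g) (B i) := commute_of (by simp)

lemma main_rel (i : Fin g) : A i * B i * (A i)⁻¹ * (B i)⁻¹ = S ^ (2 : ℤ) := by
  have h := rel_one (g := g) (Or.inr ⟨i, rfl⟩)
  simp only [map_mul, map_inv, map_pow] at h
  have h2 : (A i * B i * (A i)⁻¹ * (B i)⁻¹) * ((S : GGroup g) ^ (2 : ℕ))⁻¹ = 1 := h
  rw [mul_inv_eq_one] at h2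
  rw [h2]; norm_cast

/-- `A i * B i = B i * A i * S ^ 2`. -/
lemma AB_rel (i : Fin g) : A i * B i = B i * A i * S ^ (2 : ℤ) := by
  have h := main_rel i
  have hSA := ((commute_SA i).zpow_left (2 : ℤ)).symm
  calc A i * B i = (A i * B i * (A i)⁻¹ * (B i)⁻¹) * (B i * A i) := by group
    _ = S ^ (2:ℤ) * (B i * A i) := by rw [h]
    _ = B i * A i * S ^ (2:ℤ) := by
        rw [mul_assoc]
        exact (((commute_SB i).zpow_left 2).mul_right
          ((commute_SA i).zpow_left 2)).eq

/-- `B j * A i = A i * B j * S ^ (if i = j then -2 else 0)` uniformly. -/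
lemma BA_rel (i j : Fin g) :
    B j * A i = A i * B j * S ^ (if i = j then (-2 : ℤ) else 0) := by
  rcases eq_or_ne i j with rfl | h
  · have := swap_side (AB_rel i)
    rw [if_pos rfl, zpow_neg]; exact this
  · simp [((commute_AB h).symm).eq, if_neg h]

def P (p : Fin g → ℤ) : GGroup g := ((List.finRange g).map fun i => A i ^ p i).prod
def Q (q : Fin g → ℤ) : GGroup g := ((List.finRange g).map fun i => B i ^ q i).prod
def E (q p : Fin g → ℤ) : ℤ := ((List.finRange g).map fun j => -(2 * q j) * p j).sum

lemma P_zero : (P 0 : GGroup g) = 1 := by simp [P]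
lemma Q_zero : (Q 0 : GGroup g) = 1 := by simp [Q]
lemma E_zero_right (q : Fin g → ℤ) : E q 0 = 0 := by simp [E]
lemma E_zero_left (p : Fin g → ℤ) : E 0 p = 0 := by simp [E]

lemma list_sum_to_finset (f : Fin g → ℤ) :
    ((List.finRange g).map f).sum = ∑ j, f j := by
  rw [Fin.sum_univ_def]

lemma E_single_left (j : Fin g) (c : ℤ) (p : Fin g → ℤ) :
    E (Pi.single j c) p = -(2 * c) * p j := by
  rw [E, list_sum_to_finset]
  rw [Finset.sum_eq_single j]
  · simp
  · intro i _ hij; simp [Pi.single_apply, hij]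
  · simp

lemma E_single_right (j : Fin g) (c : ℤ) (q : Fin g → ℤ) :
    E q (Pi.single j c) = -(2 * q j) * c := by
  rw [E, list_sum_to_finset]
  rw [Finset.sum_eq_single j]
  · simp
  · intro i _ hij; simp [Pi.single_apply, hij]
  · simp

lemma P_add (p p' : Fin g → ℤ) : (P (p + p') : GGroup g) = P p * P p' :=
  list_zpow_add A commute_AA p p' _

lemma Q_add (q q' : Fin g → ℤ) : (Q (q + q') : GGroup g) = Q q * Q q' :=
  list_zpow_add B commute_BB q q' _
lemma commute_SP (k : ℤ) (p : Fin g → ℤ) : Commute ((S : GGroup g) ^ k) (P p) := by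
  apply Commute.list_prod_right
  intro x hx
  obtain ⟨i, _, rfl⟩ := List.mem_map.mp hx
  exact (commute_SA i).zpow_zpow k _

lemma commute_SQ (k : ℤ) (q : Fin g → ℤ) : Commute ((S : GGroup g) ^ k) (Q q) := by
  apply Commute.list_prod_right
  intro x hx
  obtain ⟨i, _, rfl⟩ := List.mem_map.mp hx
  exact (commute_SB i).zpow_zpow k _

lemma A_mul_B_zpow (i j : Fin g) (k : ℤ) :
    A i * B j ^ k = B j ^ k * A i * S ^ ((if i = j then (2:ℤ) else 0) * k) := by
  have e := key (s := (S : GGroup g) ^ (if i = j then (-2:ℤ) else 0)) (a := B j) (b := A i)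
      ((commute_SB j).zpow_left _) (BA_rel i j) k
  have h2 := swap_side e
  rw [h2, ← zpow_mul, ← zpow_neg]
  congr 1
  split <;> ring_nf

lemma sum_ite_finRange (i : Fin g) (c : Fin g → ℤ) :
    ((List.finRange g).map fun j => (if i = j then c j else 0)).sum = c i := by
  rw [list_sum_to_finset, Finset.sum_eq_single i]
  · simp
  · intro j _ hij; simp [(Ne.symm hij : ¬ i = j)]
  · simp

lemma A_mul_Q (i : Fin g) (q : Fin g → ℤ) :
    A i * Q q = Q q * A i * S ^ (2 * q i) := by
  have h := list_move S (A i) B q (fun j => if i = j then (2:ℤ) else 0)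
      (fun j k => (commute_SB j).zpow_zpow k _) (fun j => A_mul_B_zpow i j (q j))
      (List.finRange g)
  have hsum : ((List.finRange g).map fun j => (if i = j then (2:ℤ) else 0) * q j).sum
      = 2 * q i := by
    have h2 : (fun j => (if i = j then (2:ℤ) else 0) * q j)
        = (fun j => if i = j then 2 * q j else 0) := by
      funext j; split <;> ring_nf
    rw [h2, sum_ite_finRange i (fun j => 2 * q j)]
  simp only [Q]
  rw [h, hsum]

lemma Q_mul_A_zpow (j : Fin g) (q : Fin g → ℤ) (k : ℤ) :
    Q q * A j ^ k = A j ^ k * Q q * S ^ (-(2 * q j) * k) := by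
  have e := key (s := (S : GGroup g) ^ (2 * q j)) (a := A j) (b := Q q)
      ((commute_SA j).zpow_left _) (A_mul_Q j q) k
  have h2 := swap_side e
  rw [h2, ← zpow_mul, ← zpow_neg]
  congr 1
  ring_nf

lemma Q_mul_P (q p : Fin g → ℤ) : Q q * P p = P p * Q q * S ^ E q p := by
  have h := list_move S (Q q) A p (fun j => -(2 * q j))
      (fun j k => (commute_SA j).zpow_zpow k _) (fun j => Q_mul_A_zpow j q (p j))
      (List.finRange g)
  simp only [P, Q, E]
  exact h

lemma move3 {G : Type*} [Group G] {x y s : G} (h : y * x = x * y * s) (w : G) :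
    y * (x * w) = x * (y * (s * w)) := by
  rw [← mul_assoc, h]
  simp only [mul_assoc]

lemma mul_nf (p q p' q' : Fin g → ℤ) (m m' : ℤ) :
    (P p * Q q * S ^ m) * (P p' * Q q' * S ^ m')
      = P (p + p') * Q (q + q') * S ^ (E q p' + (m + m')) := by
  simp only [P_add, Q_add, mul_assoc]
  rw [(commute_SP m p').left_comm, (commute_SQ m q').left_comm,
    move3 (Q_mul_P q p'), (commute_SQ (E q p') q').left_comm, ← zpow_add, ← zpow_add]

lemma list_single {G : Type*} [Group G] (f : Fin g → G) (j : Fin g) (k : ℤ) :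
    ∀ l : List (Fin g), l.Nodup → j ∈ l →
      (l.map fun i => f i ^ (Pi.single j k : Fin g → ℤ) i).prod = f j ^ k := by
  intro l
  induction l with
  | nil => intro _ h; simp at h
  | cons i l ih =>
    intro hnd hmem
    obtain ⟨hil, hnd'⟩ := List.nodup_cons.mp hnd
    simp only [List.map_cons, List.prod_cons]
    rcases List.mem_cons.mp hmem with rfl | hjl
    · have h1 : ((l.map fun i => f i ^ (Pi.single j k : Fin g → ℤ) i)).prod = 1 := by
        apply List.prod_eq_one
        intro x hx
        obtain ⟨i', hi', rfl⟩ := List.mem_map.mp hx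
        have : i' ≠ j := fun hh => hil (hh ▸ hi')
        simp [Pi.single_apply, this]
      rw [h1, Pi.single_eq_same, mul_one]
    · have hij : i ≠ j := fun hh => hil (hh ▸ hjl)
      rw [ih hnd' hjl]
      simp [Pi.single_apply, hij]

lemma P_single (j : Fin g) (k : ℤ) : (P (Pi.single j k) : GGroup g) = A j ^ k :=
  list_single A j k _ (List.nodup_finRange g) (List.mem_finRange j)

lemma Q_single (j : Fin g) (k : ℤ) : (Q (Pi.single j k) : GGroup g) = B j ^ k :=
  list_single B j k _ (List.nodup_finRange g) (List.mem_finRange j)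

/-- Normal form: every element of `G_g` is `P p * Q q * S ^ m`. -/
def NF : Subgroup (GGroup g) where
  carrier := {x | ∃ p q : Fin g → ℤ, ∃ m : ℤ, x = P p * Q q * S ^ m}
  one_mem' := ⟨0, 0, 0, by rw [P_zero, Q_zero]; simp⟩
  mul_mem' := by
    rintro x y ⟨p, q, m, rfl⟩ ⟨p', q', m', rfl⟩
    exact ⟨p + p', q + q', E q p' + (m + m'), mul_nf p q p' q' m m'⟩
  inv_mem' := by
    rintro x ⟨p, q, m, rfl⟩
    refine ⟨-p, -q, -(E q (-p) + m), ?_⟩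
    have h := mul_nf p q (-p) (-q) m (-(E q (-p) + m))
    simp only [add_neg_cancel, neg_add_cancel] at h
    rw [P_zero, Q_zero] at h
    have h2 : (P p * Q q * S ^ m) * (P (-p) * Q (-q) * S ^ (-(E q (-p) + m))) = 1 := by
      rw [h]
      have he : E q (-p) + (m + -(E q (-p) + m)) = 0 := by ring
      rw [he, zpow_zero, one_mul, one_mul]
    exact (inv_eq_of_mul_eq_one_right h2).symm ▸ rfl

lemma nf_exists (x : GGroup g) : ∃ p q : Fin g → ℤ, ∃ m : ℤ, x = P p * Q q * S ^ m := by
  refine PresentedGroup.generated_by _ NF ?_ x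
  intro j
  cases j with
  | a i => exact ⟨Pi.single i 1, 0, 0, by rw [P_single, Q_zero]; simp [A]⟩
  | b i => exact ⟨0, Pi.single i 1, 0, by rw [P_zero, Q_single]; simp [B]⟩
  | s => exact ⟨0, 0, 1, by rw [P_zero, Q_zero]; simp [S]⟩

end GgAux

/-- Any homomorphism from `G_g` to a group under which `σ` has
infinite-order image is injective. -/
theorem stmt15 (g : ℕ) (hg : 1 ≤ g) {H : Type*} [Group H] (φ : GGroup g →* H)
    (hσ : ¬ IsOfFinOrder (φ (PresentedGroup.of .s))) :
    Function.Injective φ := by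
  have hσ' : ¬ IsOfFinOrder (φ GgAux.S) := hσ
  have hinj : Function.Injective fun n : ℤ => φ GgAux.S ^ n :=
    injective_zpow_iff_not_isOfFinOrder.mpr hσ'
  have hzero : ∀ k : ℤ, φ GgAux.S ^ k = 1 → k = 0 := by
    intro k hk
    have : (fun n : ℤ => φ GgAux.S ^ n) k = (fun n : ℤ => φ GgAux.S ^ n) 0 := by simpa using hk
    exact hinj this
  refine (injective_iff_map_eq_one φ).mpr ?_
  intro x hx
  obtain ⟨p, q, m, rfl⟩ := GgAux.nf_exists x
  have hp : ∀ j, p j = 0 := by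
    intro j
    have h1 := GgAux.mul_nf p q 0 (Pi.single j 1) m 0
    have h2 := GgAux.mul_nf 0 (Pi.single j 1) p q 0 m
    rw [GgAux.E_zero_right] at h1
    rw [GgAux.E_single_left] at h2
    simp only [add_zero, zero_add] at h1 h2
    have hcomm : q + Pi.single j 1 = Pi.single j 1 + q := add_comm _ _
    have key2 : (GgAux.P p * GgAux.Q q * GgAux.S ^ m)
          * (GgAux.P 0 * GgAux.Q (Pi.single j 1) * GgAux.S ^ (0:ℤ))
        = ((GgAux.P 0 * GgAux.Q (Pi.single j 1) * GgAux.S ^ (0:ℤ))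
          * (GgAux.P p * GgAux.Q q * GgAux.S ^ m)) * GgAux.S ^ (2 * p j) := by
      rw [h1, h2, hcomm, mul_assoc _ _ (GgAux.S ^ (2 * p j)), ← zpow_add]
      congr 1
      ring_nf
    have hφ := congrArg φ key2
    simp only [map_mul, map_zpow] at hφ hx
    rw [hx, one_mul, mul_one] at hφ
    have h3 : (φ GgAux.S) ^ (2 * p j) = 1 := left_eq_mul.mp hφ
    have := hzero _ h3
    omega
  have hq : ∀ j, q j = 0 := by
    intro j
    have h1 := GgAux.mul_nf (Pi.single j 1) 0 p q 0 m
    have h2 := GgAux.mul_nf p q (Pi.single j 1) 0 m 0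
    rw [GgAux.E_zero_left] at h1
    rw [GgAux.E_single_right] at h2
    simp only [add_zero, zero_add] at h1 h2
    have hcomm : Pi.single j 1 + p = p + Pi.single j 1 := add_comm _ _
    have key2 : (GgAux.P (Pi.single j 1) * GgAux.Q 0 * GgAux.S ^ (0:ℤ))
          * (GgAux.P p * GgAux.Q q * GgAux.S ^ m)
        = ((GgAux.P p * GgAux.Q q * GgAux.S ^ m)
          * (GgAux.P (Pi.single j 1) * GgAux.Q 0 * GgAux.S ^ (0:ℤ))) * GgAux.S ^ (2 * q j) := by
      rw [h1, h2, hcomm, mul_assoc _ _ (GgAux.S ^ (2 * q j)), ← zpow_add]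
      congr 1
      ring_nf
    have hφ := congrArg φ key2
    simp only [map_mul, map_zpow] at hφ hx
    rw [hx, one_mul, mul_one] at hφ
    have h3 : (φ GgAux.S) ^ (2 * q j) = 1 := left_eq_mul.mp hφ
    have := hzero _ h3
    omega
  have hp0 : p = 0 := funext fun j => hp j
  have hq0 : q = 0 := funext fun j => hq j
  rw [hp0, hq0, GgAux.P_zero, GgAux.Q_zero, one_mul, one_mul] at hx ⊢
  rw [map_zpow] at hx
  rw [hzero m hx, zpow_zero]
end

section
/- Let g ≥ 1. In the group D_g, the subgroup generated by σ and ζ is free abelian of rank 2, i.e. isomorphic to ℤ × ℤ. -/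
set_option linter.unreachableTactic false
set_option linter.unusedTactic false
set_option linter.unnecessarySeqFocus false

open scoped commutatorElement

@[ext] structure Hberg (g : ℕ) where
  x : Fin g → ℤ
  y : Fin g → ℤ
  m : ℤ
  n : ℤ

namespace Hberg
variable {g : ℕ}

def c (x y : Fin g → ℤ) : ℤ := 2 * ∑ i, x i * y i

lemma c_add_left (x x' y : Fin g → ℤ) : c (x + x') y = c x y + c x' y := by
  simp only [c, Pi.add_apply, add_mul, Finset.sum_add_distrib]; all_goals ring

lemma c_add_right (x y y' : Fin g → ℤ) : c x (y + y') = c x y + c x y' := by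
  simp only [c, Pi.add_apply, mul_add, Finset.sum_add_distrib]; all_goals ring

@[simp] lemma c_zero_left (y : Fin g → ℤ) : c (0 : Fin g → ℤ) y = 0 := by simp [c]
@[simp] lemma c_zero_right (x : Fin g → ℤ) : c x (0 : Fin g → ℤ) = 0 := by simp [c]
lemma c_neg_left (x y : Fin g → ℤ) : c (-x) y = - c x y := by
  simp only [c, Pi.neg_apply, neg_mul, Finset.sum_neg_distrib]; all_goals ring
lemma c_neg_right (x y : Fin g → ℤ) : c x (-y) = - c x y := by
  simp only [c, Pi.neg_apply, mul_neg, Finset.sum_neg_distrib]; all_goals ring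

instance : Mul (Hberg g) := ⟨fun a b => ⟨a.x + b.x, a.y + b.y, a.m + b.m + c a.x b.y, a.n + b.n⟩⟩
instance : One (Hberg g) := ⟨⟨0, 0, 0, 0⟩⟩
instance : Inv (Hberg g) := ⟨fun a => ⟨-a.x, -a.y, -a.m + c a.x a.y, -a.n⟩⟩

@[simp] lemma mul_x (a b : Hberg g) : (a * b).x = a.x + b.x := rfl
@[simp] lemma mul_y (a b : Hberg g) : (a * b).y = a.y + b.y := rfl
@[simp] lemma mul_m (a b : Hberg g) : (a * b).m = a.m + b.m + c a.x b.y := rfl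
@[simp] lemma mul_n (a b : Hberg g) : (a * b).n = a.n + b.n := rfl
@[simp] lemma one_x : (1 : Hberg g).x = 0 := rfl
@[simp] lemma one_y : (1 : Hberg g).y = 0 := rfl
@[simp] lemma one_m : (1 : Hberg g).m = 0 := rfl
@[simp] lemma one_n : (1 : Hberg g).n = 0 := rfl
@[simp] lemma inv_x (a : Hberg g) : a⁻¹.x = -a.x := rfl
@[simp] lemma inv_y (a : Hberg g) : a⁻¹.y = -a.y := rfl
@[simp] lemma inv_m (a : Hberg g) : a⁻¹.m = -a.m + c a.x a.y := rfl
@[simp] lemma inv_n (a : Hberg g) : a⁻¹.n = -a.n := rfl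

instance : Group (Hberg g) where
  mul_assoc a b cc := by
    ext <;> simp [c_add_left, c_add_right] <;> ring
  one_mul a := by ext <;> simp
  mul_one a := by ext <;> simp
  inv_mul_cancel a := by
    ext <;> simp [c_neg_left] <;> ring

lemma commutator_eq (a b : Hberg g) :
    ⁅a, b⁆ = ⟨0, 0, c a.x b.y - c b.x a.y, 0⟩ := by
  ext <;> simp [commutatorElement_def, c_add_left, c_add_right, c_neg_left, c_neg_right] <;> ring

lemma c_single_single (i j : Fin g) :
    c (Pi.single i (1:ℤ)) (Pi.single j (1:ℤ)) = if i = j then 2 else 0 := by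
  rcases eq_or_ne i j with rfl | h
  · simp [c, Pi.single_apply]
  · simp only [c, Pi.single_apply]
    rw [Finset.sum_eq_zero, mul_zero, if_neg h]
    intro k _
    split_ifs with h1 h2
    · exact absurd (h1.symm.trans h2) h
    all_goals ring

end Hberg



/-- Generators of the group `D_g`: `σ`, `ζ` and `a i`, `b i` for `i : Fin g`. -/
inductive DGen (g : ℕ) : Type
  | s : DGen g
  | z : DGen g
  | a : Fin g → DGen g
  | b : Fin g → DGen g

/-- Relators of `D_g`: `σ` and `ζ` are central, `[a_i, a_j] = [a_i, b_j] = 1` for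
`i ≠ j`, and `[a_j, b_j] = σ²`. -/
def DgRels (g : ℕ) : Set (FreeGroup (DGen g)) :=
  {r | ∃ x : DGen g, r = ⁅(.of .s : FreeGroup (DGen g)), .of x⁆} ∪
  {r | ∃ x : DGen g, r = ⁅(.of .z : FreeGroup (DGen g)), .of x⁆} ∪
  {r | ∃ i j : Fin g, i ≠ j ∧ r = ⁅(.of (.a i) : FreeGroup (DGen g)), .of (.a j)⁆} ∪
  {r | ∃ i j : Fin g, i ≠ j ∧ r = ⁅(.of (.a i) : FreeGroup (DGen g)), .of (.b j)⁆} ∪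
  {r | ∃ j : Fin g,
      r = ⁅(.of (.a j) : FreeGroup (DGen g)), .of (.b j)⁆ * ((.of .s : FreeGroup (DGen g)) ^ 2)⁻¹}

/-- The group `D_g`, as a presented group. -/
abbrev DGroup (g : ℕ) := PresentedGroup (DgRels g)

/-- Images of the generators in the Heisenberg-type group. -/
def dgenToH {g : ℕ} : DGen g → Hberg g
  | .s => ⟨0, 0, 1, 0⟩
  | .z => ⟨0, 0, 0, 1⟩
  | .a i => ⟨Pi.single i 1, 0, 0, 0⟩
  | .b i => ⟨0, Pi.single i 1, 0, 0⟩

lemma dgenToH_rels {g : ℕ} : ∀ r ∈ DgRels g, FreeGroup.lift (dgenToH (g := g)) r = 1 := by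
  intro r hr
  rcases hr with ((((⟨x, rfl⟩ | ⟨x, rfl⟩) | ⟨i, j, hij, rfl⟩) | ⟨i, j, hij, rfl⟩) | ⟨j, rfl⟩) <;>
    simp only [map_commutatorElement, map_mul, map_inv, map_pow, FreeGroup.lift_apply_of,
      Hberg.commutator_eq]
  · ext <;> simp [dgenToH]
  · ext <;> simp [dgenToH]
  · ext <;> simp [dgenToH]
  · ext <;> simp [dgenToH, Hberg.c_single_single, hij]
  · ext <;> simp [dgenToH, Hberg.c_single_single, pow_two]

/-- The homomorphism `D_g → H_g`. -/
def piH (g : ℕ) : DGroup g →* Hberg g := PresentedGroup.toGroup dgenToH_rels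

lemma rel_eq_one {g : ℕ} {r : FreeGroup (DGen g)} (hr : r ∈ DgRels g) :
    (QuotientGroup.mk r : DGroup g) = 1 := by
  rw [QuotientGroup.eq_one_iff]
  exact Subgroup.subset_normalClosure hr

lemma commute_sz {g : ℕ} :
    Commute (PresentedGroup.of (rels := DgRels g) .s) (PresentedGroup.of .z) := by
  have h : (QuotientGroup.mk ⁅(.of .s : FreeGroup (DGen g)), .of .z⁆ : DGroup g) = 1 :=
    rel_eq_one (Or.inl (Or.inl (Or.inl (Or.inl ⟨DGen.z, rfl⟩))))
  have h2 : ⁅(PresentedGroup.of (rels := DgRels g) DGen.s),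
      (PresentedGroup.of (rels := DgRels g) DGen.z)⁆ = 1 := h
  exact commutatorElement_eq_one_iff_commute.mp h2

/-- The homomorphism `ℤ² → D_g` sending `(m, n)` to `σ^m ζ^n`. -/
def phi (g : ℕ) : Multiplicative (ℤ × ℤ) →* DGroup g where
  toFun p := (PresentedGroup.of .s : DGroup g) ^ p.toAdd.1 *
    (PresentedGroup.of .z : DGroup g) ^ p.toAdd.2
  map_one' := by simp
  map_mul' p q := by
    have h := commute_sz (g := g)
    simp only [toAdd_mul, Prod.fst_add, Prod.snd_add, zpow_add]
    rw [mul_assoc, mul_assoc, ← mul_assoc ((PresentedGroup.of .z : DGroup g) ^ p.toAdd.2),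
      ((h.zpow_zpow q.toAdd.1 p.toAdd.2).symm).eq]
    group

lemma piH_phi {g : ℕ} (p : Multiplicative (ℤ × ℤ)) :
    piH g (phi g p) = ⟨0, 0, p.toAdd.1, p.toAdd.2⟩ := by
  have hs : piH g (PresentedGroup.of .s) = ⟨0, 0, 1, 0⟩ := PresentedGroup.toGroup.of dgenToH_rels
  have hz : piH g (PresentedGroup.of .z) = ⟨0, 0, 0, 1⟩ := PresentedGroup.toGroup.of dgenToH_rels
  have key : ∀ (m n : ℤ), (⟨0, 0, 1, 0⟩ : Hberg g) ^ m * (⟨0, 0, 0, 1⟩ : Hberg g) ^ n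
      = ⟨0, 0, m, n⟩ := by
    have h1 : ∀ m : ℤ, (⟨0, 0, 1, 0⟩ : Hberg g) ^ m = ⟨0, 0, m, 0⟩ := by
      have hn : ∀ k : ℕ, (⟨0, 0, 1, 0⟩ : Hberg g) ^ k = ⟨0, 0, (k : ℤ), 0⟩ := by
        intro k; induction k with
        | zero => rfl
        | succ k ih => rw [pow_succ, ih]; ext <;> simp
      intro m
      rcases m with k | k
      · rw [Int.ofNat_eq_coe, zpow_natCast, hn]
      · rw [zpow_negSucc, hn]; ext <;> simp [Int.negSucc_eq] <;> push_cast <;> ring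
    have h2 : ∀ n : ℤ, (⟨0, 0, 0, 1⟩ : Hberg g) ^ n = ⟨0, 0, 0, n⟩ := by
      have hn : ∀ k : ℕ, (⟨0, 0, 0, 1⟩ : Hberg g) ^ k = ⟨0, 0, 0, (k : ℤ)⟩ := by
        intro k; induction k with
        | zero => rfl
        | succ k ih => rw [pow_succ, ih]; ext <;> simp
      intro n
      rcases n with k | k
      · rw [Int.ofNat_eq_coe, zpow_natCast, hn]
      · rw [zpow_negSucc, hn]; ext <;> simp [Int.negSucc_eq] <;> push_cast <;> ring
    intro m n
    rw [h1, h2]; ext <;> simp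
  simp only [phi, MonoidHom.coe_mk, OneHom.coe_mk, map_mul, map_zpow, hs, hz, key]

lemma phi_injective (g : ℕ) : Function.Injective (phi g) := by
  intro p q hpq
  have h := congrArg (piH g) hpq
  rw [piH_phi, piH_phi] at h
  have h1 := congrArg Hberg.m h
  have h2 := congrArg Hberg.n h
  exact Multiplicative.toAdd.injective (Prod.ext h1 h2)

lemma phi_range (g : ℕ) :
    (phi g).range = Subgroup.closure
      {(PresentedGroup.of .s : DGroup g), (PresentedGroup.of .z : DGroup g)} := by
  apply le_antisymm
  · rintro _ ⟨p, rfl⟩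
    have hs : (PresentedGroup.of .s : DGroup g) ∈ Subgroup.closure
        {(PresentedGroup.of .s : DGroup g), (PresentedGroup.of .z : DGroup g)} :=
      Subgroup.subset_closure (by simp)
    have hz : (PresentedGroup.of .z : DGroup g) ∈ Subgroup.closure
        {(PresentedGroup.of .s : DGroup g), (PresentedGroup.of .z : DGroup g)} :=
      Subgroup.subset_closure (by simp)
    exact mul_mem (Subgroup.zpow_mem _ hs _) (Subgroup.zpow_mem _ hz _)
  · rw [Subgroup.closure_le]
    rintro x (rfl | rfl)
    · exact ⟨Multiplicative.ofAdd (1, 0), by simp [phi]⟩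
    · exact ⟨Multiplicative.ofAdd (0, 1), by simp [phi]⟩

/-- In `D_g`, the subgroup generated by `σ` and `ζ` is free
abelian of rank `2`. -/
theorem stmt16 (g : ℕ) (hg : 1 ≤ g) :
    Nonempty (↥(Subgroup.closure
        {(PresentedGroup.of .s : DGroup g), (PresentedGroup.of .z : DGroup g)}) ≃*
      Multiplicative (ℤ × ℤ)) := by
  refine ⟨?_⟩
  exact ((MulEquiv.subgroupCongr (phi_range g).symm).trans
    (MonoidHom.ofInjective (phi_injective g)).symm)
end
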